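/- arXiv:math/0311076 — 5 statements merged into one kernel-verified Lean document; each statement's English description precedes it below -/
import Mathlib

section
/- Let M be a Coxeter matrix on a type S with associated Coxeter system (W, cs), and let (w_1, …, w_r) be a word in S such that some s ∈ S appears exactly once among its letters (i.e., #{i : w_i = s} = 1). Then cs.simple w_1 · … · cs.simple w_r ≠ 1 in W. -/
namespace CoxAux

open Finsupp

variable {S : Type*} [DecidableEq S]

/-- `kappa n` is `-cos (π / n)`, with `n = 0` (representing `∞`) mapped to `-1`. -/
noncomputable def kappa (n : ℕ) : ℝ := if n = 0 then -1 else -Real.cos (Real.pi / n)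

lemma kappa_of_ne_zero {n : ℕ} (h : n ≠ 0) : kappa n = -Real.cos (Real.pi / n) := if_neg h

lemma kappa_one : kappa 1 = 1 := by
  rw [kappa_of_ne_zero one_ne_zero]
  norm_num [Real.cos_pi]

variable (M : CoxeterMatrix S)

/-- The bilinear-form pairing against the `i`-th basis vector. -/
noncomputable def beta (i : S) : (S →₀ ℝ) →ₗ[ℝ] ℝ :=
  Finsupp.linearCombination ℝ (fun j => kappa (M j i))

lemma beta_single (i j : S) (t : ℝ) :
    beta M i (Finsupp.single j t) = t * kappa (M j i) := by
  simp [beta, Finsupp.linearCombination_single, smul_eq_mul]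

/-- The geometric reflection associated to the simple generator `i`. -/
noncomputable def sig (i : S) : Function.End (S →₀ ℝ) :=
  fun v => v - Finsupp.single i (2 * beta M i v)

lemma end_ext {X : Type*} {f g : Function.End X} (h : ∀ x, f x = g x) : f = g := funext h

lemma isLiftable : M.IsLiftable (sig M) := by
  intro i j
  rcases eq_or_ne i j with rfl | hij
  · rw [M.diagonal i, pow_one]
    apply end_ext
    intro v
    have hkii : kappa (M i i) = 1 := by rw [M.diagonal i, kappa_one]
    show sig M i (v - Finsupp.single i (2 * beta M i v)) = v
    have b1 : beta M i (v - Finsupp.single i (2 * beta M i v)) = -(beta M i v) := by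
      rw [map_sub, beta_single, hkii]; ring
    show (v - Finsupp.single i (2 * beta M i v))
        - Finsupp.single i (2 * beta M i (v - Finsupp.single i (2 * beta M i v))) = v
    rw [b1, show (2:ℝ) * -(beta M i v) = -(2 * beta M i v) by ring, Finsupp.single_neg]
    abel
  · set m := M i j with hm
    rcases eq_or_ne m 0 with h0 | hm0
    · rw [h0, pow_zero]
    · have hm1 : m ≠ 1 := M.off_diagonal i j hij
      have hm2 : 2 ≤ m := by omega
      have hmR : (1:ℝ) < (m:ℝ) := by exact_mod_cast (by omega : 1 < m)
      set θ : ℝ := Real.pi / m with hθ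
      have hθ0 : 0 < θ := div_pos Real.pi_pos (by linarith)
      have hθπ : θ < Real.pi := div_lt_self Real.pi_pos hmR
      have hsin : 0 < Real.sin θ := Real.sin_pos_of_pos_of_lt_pi hθ0 hθπ
      have hcs : Real.sin θ ^ 2 + Real.cos θ ^ 2 = 1 := Real.sin_sq_add_cos_sq θ
      have hkii : kappa (M i i) = 1 := by rw [M.diagonal i, kappa_one]
      have hkjj : kappa (M j j) = 1 := by rw [M.diagonal j, kappa_one]
      have hkij : kappa (M i j) = -Real.cos θ := by
        rw [← hm, kappa_of_ne_zero hm0, hθ]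
      have hkji : kappa (M j i) = -Real.cos θ := by
        rw [M.symmetric j i, ← hm, kappa_of_ne_zero hm0, hθ]
      apply end_ext
      intro v
      set c := Real.cos θ with hc
      set sn := Real.sin θ with hsn
      set p := beta M i v with hp
      set q := beta M j v with hq
      have key : ∀ k : ℕ, ∃ a b : ℝ,
          ((sig M i * sig M j) ^ k) v = v + Finsupp.single i a + Finsupp.single j b
          ∧ sn ^ 2 * a = -(p * (1 - Real.cos (2*(k:ℝ)*θ))
              + q * (c - (Real.cos (2*(k:ℝ)*θ) * c - Real.sin (2*(k:ℝ)*θ) * sn)))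
          ∧ sn ^ 2 * b = -(p * (c - (Real.cos (2*(k:ℝ)*θ) * c + Real.sin (2*(k:ℝ)*θ) * sn))
              + q * (1 - Real.cos (2*(k:ℝ)*θ))) := by
        intro k
        induction k with
        | zero =>
          refine ⟨0, 0, ?_, ?_, ?_⟩
          · rw [pow_zero]
            show v = v + Finsupp.single i (0:ℝ) + Finsupp.single j (0:ℝ)
            simp
          · push_cast
            norm_num
          · push_cast
            norm_num
        | succ k ih =>
          obtain ⟨a, b, hv, ha, hb⟩ := ih
          refine ⟨a - 2 * (p + a - c * (b - 2 * (q - c * a + b))), b - 2 * (q - c * a + b),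
            ?_, ?_, ?_⟩
          · have bj : beta M j (v + Finsupp.single i a + Finsupp.single j b)
                = q - c * a + b := by
              rw [map_add, map_add, beta_single, beta_single, hkij, hkjj, ← hq]; ring
            have e1 : sig M j (v + Finsupp.single i a + Finsupp.single j b)
                = v + Finsupp.single i a + Finsupp.single j (b - 2 * (q - c * a + b)) := by
              show (v + Finsupp.single i a + Finsupp.single j b)
                  - Finsupp.single j (2 * beta M j (v + Finsupp.single i a + Finsupp.single j b))
                  = _
              rw [bj, Finsupp.single_sub]
              abel
            have bi : beta M i (v + Finsupp.single i a
                  + Finsupp.single j (b - 2 * (q - c * a + b)))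
                = p + a - c * (b - 2 * (q - c * a + b)) := by
              rw [map_add, map_add, beta_single, beta_single, hkii, hkji, ← hp]; ring
            have e2 : sig M i (v + Finsupp.single i a
                  + Finsupp.single j (b - 2 * (q - c * a + b)))
                = v + Finsupp.single i (a - 2 * (p + a - c * (b - 2 * (q - c * a + b))))
                  + Finsupp.single j (b - 2 * (q - c * a + b)) := by
              show (v + Finsupp.single i a + Finsupp.single j (b - 2 * (q - c * a + b)))
                  - Finsupp.single i (2 * beta M i (v + Finsupp.single i a
                      + Finsupp.single j (b - 2 * (q - c * a + b)))) = _
              rw [bi, Finsupp.single_sub, Finsupp.single_sub]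
              abel
            calc ((sig M i * sig M j) ^ (k+1)) v
                = (sig M i * sig M j) (((sig M i * sig M j) ^ k) v) := by rw [pow_succ']; rfl
              _ = sig M i (sig M j (v + Finsupp.single i a + Finsupp.single j b)) := by
                  rw [hv]; rfl
              _ = _ := by rw [e1, e2]
          · push_cast
            rw [show 2 * ((k:ℝ) + 1) * θ = 2*(k:ℝ)*θ + 2*θ by ring, Real.cos_add, Real.sin_add,
              Real.cos_two_mul, Real.sin_two_mul, ← hc, ← hsn]
            linear_combination (4*c^2 - 1) * ha - 2*c*hb
              + (-4*q*c + 2*q*c*Real.cos (2*(k:ℝ)*θ) - 2*p) * hcs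
          · push_cast
            rw [show 2 * ((k:ℝ) + 1) * θ = 2*(k:ℝ)*θ + 2*θ by ring, Real.cos_add, Real.sin_add,
              Real.cos_two_mul, Real.sin_two_mul, ← hc, ← hsn]
            linear_combination 2*c*ha - hb + (-2*q - 2*p*c*Real.cos (2*(k:ℝ)*θ)) * hcs
      obtain ⟨a, b, hv, ha, hb⟩ := key m
      have h2pi : 2*(m:ℝ)*θ = 2*Real.pi := by
        rw [hθ]
        field_simp
      rw [h2pi, Real.cos_two_pi, Real.sin_two_pi] at ha hb
      have hsn2 : sn ^ 2 ≠ 0 := pow_ne_zero _ (ne_of_gt hsin)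
      have ha0 : a = 0 := by
        have : sn ^ 2 * a = 0 := by rw [ha]; ring
        exact (mul_eq_zero.mp this).resolve_left hsn2
      have hb0 : b = 0 := by
        have : sn ^ 2 * b = 0 := by rw [hb]; ring
        exact (mul_eq_zero.mp this).resolve_left hsn2
      show ((sig M i * sig M j) ^ m) v = v
      rw [hv, ha0, hb0]
      simp

variable {W : Type*} [Group W]

/-- The geometric representation of the Coxeter group. -/
noncomputable def rho (cs : CoxeterSystem M W) : W →* Function.End (S →₀ ℝ) :=
  cs.lift ⟨sig M, isLiftable M⟩

lemma rho_simple (cs : CoxeterSystem M W) (i : S) :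
    rho M cs (cs.simple i) = sig M i :=
  cs.lift_apply_simple (isLiftable M) i

lemma rho_wordProd_coord (cs : CoxeterSystem M W) (s : S) :
    ∀ (c : List S), s ∉ c → (rho M cs (cs.wordProd c)) (Finsupp.single s 1) s = 1 := by
  intro c
  induction c with
  | nil =>
    intro _
    rw [CoxeterSystem.wordProd_nil, map_one]
    show (Finsupp.single s (1:ℝ)) s = 1
    simp
  | cons u t ih =>
    intro hs
    have hus : u ≠ s := fun h => hs (by simp [h])
    have hst : s ∉ t := fun h => hs (List.mem_cons_of_mem _ h)
    rw [CoxeterSystem.wordProd_cons, map_mul]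
    show (rho M cs (cs.simple u)) ((rho M cs (cs.wordProd t)) (Finsupp.single s 1)) s = 1
    rw [rho_simple]
    set w := (rho M cs (cs.wordProd t)) (Finsupp.single s 1) with hw
    show (w - Finsupp.single u (2 * beta M u w)) s = 1
    rw [Finsupp.sub_apply, Finsupp.single_eq_of_ne' hus, sub_zero, hw]
    exact ih hst

lemma rho_simple_coord (cs : CoxeterSystem M W) (s : S) :
    (rho M cs (cs.simple s)) (Finsupp.single s 1) s = -1 := by
  rw [rho_simple]
  show (Finsupp.single s (1:ℝ)
      - Finsupp.single s (2 * beta M s (Finsupp.single s (1:ℝ)))) s = -1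
  rw [beta_single, M.diagonal s, kappa_one, Finsupp.sub_apply, Finsupp.single_eq_same,
    Finsupp.single_eq_same]
  ring

lemma exists_split (s : S) :
    ∀ (l : List S), l.count s = 1 → ∃ a b : List S, l = a ++ s :: b ∧ s ∉ a ∧ s ∉ b := by
  intro l
  induction l with
  | nil => intro h; simp at h
  | cons u t ih =>
    intro h
    rcases eq_or_ne u s with rfl | hus
    · rw [List.count_cons_self] at h
      have h0 : t.count u = 0 := by omega
      exact ⟨[], t, rfl, by simp, List.count_eq_zero.mp h0⟩
    · rw [List.count_cons_of_ne hus] at h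
      obtain ⟨a, b, rfl, h1, h2⟩ := ih h
      exact ⟨u :: a, b, rfl, by
        intro hmem
        rcases List.mem_cons.mp hmem with h' | h'
        · exact hus h'.symm
        · exact h1 h', h2⟩

end CoxAux

/-- Let `(W, cs)` be the Coxeter system of a Coxeter matrix `M` on `S`.  If the letter `s`
appears exactly once in the word `l = (w₁, …, w_r)`, then `w₁ ⋯ w_r ≠ 1` in `W`. -/
theorem wordProd_ne_one_of_count_eq_one {S : Type*} [DecidableEq S] {M : CoxeterMatrix S}
    {W : Type*} [Group W] (cs : CoxeterSystem M W)
    (l : List S) (s : S) (hcount : l.count s = 1) :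
    cs.wordProd l ≠ 1 := by
  intro h
  obtain ⟨a, b, rfl, hsa, hsb⟩ := CoxAux.exists_split s l hcount
  rw [CoxeterSystem.wordProd_append, CoxeterSystem.wordProd_cons] at h
  have h4 : cs.simple s * cs.wordProd b = (cs.wordProd a)⁻¹ := by
    rw [eq_inv_iff_mul_eq_one]
    calc cs.simple s * cs.wordProd b * cs.wordProd a
        = (cs.wordProd a)⁻¹ * (cs.wordProd a * (cs.simple s * cs.wordProd b)) * cs.wordProd a := by
          group
      _ = 1 := by rw [h]; group
  have h3 : cs.simple s = (cs.wordProd a)⁻¹ * (cs.wordProd b)⁻¹ := by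
    rw [← h4]; group
  rw [← CoxeterSystem.wordProd_reverse, ← CoxeterSystem.wordProd_reverse,
    ← CoxeterSystem.wordProd_append] at h3
  have hsc : s ∉ a.reverse ++ b.reverse := by
    intro hmem
    rcases List.mem_append.mp hmem with h' | h'
    · exact hsa (List.mem_reverse.mp h')
    · exact hsb (List.mem_reverse.mp h')
  have hL : (CoxAux.rho M cs (cs.simple s)) (Finsupp.single s 1) s = -1 :=
    CoxAux.rho_simple_coord M cs s
  have hR : (CoxAux.rho M cs (cs.wordProd (a.reverse ++ b.reverse)))
      (Finsupp.single s 1) s = 1 :=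
    CoxAux.rho_wordProd_coord M cs s _ hsc
  rw [h3, hR] at hL
  norm_num at hL
end

section
/- Let M be a Coxeter matrix on a type S with associated Coxeter system (W, cs), and let (w_1, …, w_r) be a word in S such that some s ∈ S appears exactly once among its letters. Set w = cs.simple w_1 · … · cs.simple w_r ∈ W. Then every reduced expression (t_1, …, t_l) for w contains the letter s, i.e., there exists j ∈ {1, …, l} with t_j = s. -/
open Real List

namespace CoxAux

noncomputable def pSeq (t : ℝ) : ℕ → ℝ × ℝ
  | 0 => (0, 1)
  | (k+1) => (t * (pSeq t k).1 + (pSeq t k).2, -(pSeq t k).1)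

noncomputable def S1 (t : ℝ) (k : ℕ) : ℝ := ∑ j ∈ Finset.range k, (pSeq t j).1
noncomputable def S2 (t : ℝ) (k : ℕ) : ℝ := ∑ j ∈ Finset.range k, (pSeq t j).2

lemma S1_step (t : ℝ) (n : ℕ) : S1 t (n+1) = S1 t n + (pSeq t n).1 :=
  Finset.sum_range_succ _ n

lemma S2_step (t : ℝ) (n : ℕ) : S2 t (n+1) = S2 t n + (pSeq t n).2 :=
  Finset.sum_range_succ _ n

lemma S1_succ (t : ℝ) (k : ℕ) : S1 t (k+1) = t * S1 t k + S2 t k := by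
  induction k with
  | zero => simp [S1, S2, pSeq]
  | succ k ih =>
    have ih2 := ih
    rw [S1_step t k] at ih2
    rw [S1_step t (k+1), S2_step t k, S1_step t k,
      show pSeq t (k+1) = (t * (pSeq t k).1 + (pSeq t k).2, -(pSeq t k).1) from rfl]
    linear_combination ih2

lemma S2_succ (t : ℝ) (k : ℕ) : S2 t (k+1) = 1 - S1 t k := by
  induction k with
  | zero => simp [S1, S2, pSeq]
  | succ k ih =>
    rw [S2_step t (k+1), ih, S1_step t k,
      show pSeq t (k+1) = (t * (pSeq t k).1 + (pSeq t k).2, -(pSeq t k).1) from rfl]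
    ring

lemma pSeq_trig (θ : ℝ) (j : ℕ) :
    (pSeq (2 * Real.cos (2*θ)) j).1 * Real.sin (2*θ) = Real.sin (2*j*θ) ∧
    (pSeq (2 * Real.cos (2*θ)) j).2 * Real.sin (2*θ) = -Real.sin ((2*j-2)*θ) := by
  induction j with
  | zero =>
    constructor
    · simp [pSeq]
    · simp only [pSeq, one_mul, Nat.cast_zero]
      rw [show ((2:ℝ)*0-2)*θ = -(2*θ) by ring, Real.sin_neg]
      ring
  | succ j ih =>
    obtain ⟨h1, h2⟩ := ih
    have h3 : Real.sin (2*j*θ + 2*θ) + Real.sin (2*j*θ - 2*θ) =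
        2 * Real.cos (2*θ) * Real.sin (2*j*θ) := by
      rw [Real.sin_add, Real.sin_sub]; ring
    constructor
    · show (2 * Real.cos (2*θ) * (pSeq _ j).1 + (pSeq _ j).2) * Real.sin (2*θ) = _
      push_cast
      rw [show (2*((j:ℝ)+1))*θ = 2*j*θ + 2*θ by ring]
      rw [show ((2:ℝ)*j-2)*θ = 2*j*θ - 2*θ by ring] at h2
      linear_combination 2*Real.cos (2*θ)*h1 + h2 - h3
    · show (-(pSeq _ j).1) * Real.sin (2*θ) = _
      push_cast
      rw [show ((2:ℝ)*(j+1)-2)*θ = 2*j*θ by ring, ← h1]; ring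

lemma sin_sum_telescope (θ φ : ℝ) (n : ℕ) :
    2 * Real.sin θ * (∑ j ∈ Finset.range n, Real.sin ((2*j+φ)*θ)) =
      Real.cos ((φ-1)*θ) - Real.cos ((2*n-1+φ)*θ) := by
  induction n with
  | zero =>
    simp only [Finset.range_zero, Finset.sum_empty, mul_zero, Nat.cast_zero]
    rw [show ((0:ℝ)-1+φ)*θ = (φ-1)*θ by ring, sub_self]
  | succ n ih =>
    rw [Finset.sum_range_succ, mul_add, ih]
    push_cast
    rw [show ((2:ℝ)*(n+1)-1+φ)*θ = (2*n+φ)*θ + θ by ring]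
    rw [show ((2:ℝ)*n-1+φ)*θ = (2*n+φ)*θ - θ by ring]
    rw [Real.cos_add, Real.cos_sub]
    ring

lemma sin_sum_zero {m : ℕ} (hm : 2 ≤ m) (φ : ℝ) :
    (∑ j ∈ Finset.range m, Real.sin ((2*j+φ) * (Real.pi/m))) = 0 := by
  have hm0 : (0:ℝ) < m := by positivity
  have hm2 : (2:ℝ) ≤ m := by exact_mod_cast hm
  set θ := Real.pi / m with hθ
  have hsin : 0 < Real.sin θ := by
    apply Real.sin_pos_of_pos_of_lt_pi
    · positivity
    · rw [hθ, div_lt_iff₀ hm0]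
      nlinarith [Real.pi_pos]
  have h := sin_sum_telescope θ φ m
  have hmθ : (2*(m:ℝ)-1+φ)*θ = (φ-1)*θ + 2*Real.pi := by
    rw [hθ]; field_simp; ring
  rw [hmθ, Real.cos_add_two_pi, sub_self] at h
  exact (mul_eq_zero.mp h).resolve_left (ne_of_gt (by linarith))

noncomputable def rSeq (c a b : ℝ) : ℕ → ℝ × ℝ
  | 0 => (0, 0)
  | (k+1) => (-(rSeq c a b k).1 - a - c * (-(rSeq c a b k).2 - b - c*(rSeq c a b k).1),
              -(rSeq c a b k).2 - b - c*(rSeq c a b k).1)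

lemma rSeq_closed (c a b : ℝ) (k : ℕ) :
    rSeq c a b k = (S1 (c^2-2) k * ((c^2-1)*(c*b-a) + c*(-b)) + S2 (c^2-2) k * (c*b-a),
                    S1 (c^2-2) k * (-c*(c*b-a) - (-b)) + S2 (c^2-2) k * (-b)) := by
  induction k with
  | zero => simp [rSeq, S1, S2]
  | succ k ih =>
    rw [show rSeq c a b (k+1) =
      (-(rSeq c a b k).1 - a - c * (-(rSeq c a b k).2 - b - c*(rSeq c a b k).1),
       -(rSeq c a b k).2 - b - c*(rSeq c a b k).1) from rfl, ih, S1_succ, S2_succ]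
    rw [Prod.mk.injEq]
    constructor <;> ring

lemma sin_two_ne {m : ℕ} (hm : 3 ≤ m) : Real.sin (2*(Real.pi/m)) ≠ 0 := by
  have hm0 : (0:ℝ) < m := by positivity
  have hm3 : (3:ℝ) ≤ m := by exact_mod_cast hm
  apply ne_of_gt
  apply Real.sin_pos_of_pos_of_lt_pi
  · positivity
  · rw [show 2*(Real.pi/m) = 2*Real.pi/m by ring, div_lt_iff₀ hm0]
    nlinarith [Real.pi_pos]

lemma S1_zero {m : ℕ} (hm : 3 ≤ m) : S1 (2*Real.cos (2*(Real.pi/m))) m = 0 := by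
  set θ := Real.pi / m with hθ
  have hs := sin_sum_zero (by omega : 2 ≤ m) 0
  have key : S1 (2*Real.cos (2*θ)) m * Real.sin (2*θ)
      = ∑ j ∈ Finset.range m, Real.sin ((2*j+0) * θ) := by
    rw [S1, Finset.sum_mul]
    refine Finset.sum_congr rfl fun j _ => ?_
    rw [(pSeq_trig θ j).1, show ((2:ℝ)*j+0)*θ = 2*j*θ by ring]
  rw [hs] at key
  exact (mul_eq_zero.mp key).resolve_right (sin_two_ne hm)

lemma S2_zero {m : ℕ} (hm : 3 ≤ m) : S2 (2*Real.cos (2*(Real.pi/m))) m = 0 := by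
  set θ := Real.pi / m with hθ
  have hs := sin_sum_zero (by omega : 2 ≤ m) (-2)
  have key : S2 (2*Real.cos (2*θ)) m * Real.sin (2*θ)
      = -∑ j ∈ Finset.range m, Real.sin ((2*j+(-2)) * θ) := by
    rw [S2, Finset.sum_mul, ← Finset.sum_neg_distrib]
    refine Finset.sum_congr rfl fun j _ => ?_
    rw [(pSeq_trig θ j).2, show ((2:ℝ)*j+(-2))*θ = (2*j-2)*θ by ring]
  rw [hs] at key
  simp only [neg_zero] at key
  exact (mul_eq_zero.mp key).resolve_right (sin_two_ne hm)

lemma rSeq_zero {m : ℕ} (hm : 2 ≤ m) (a b : ℝ) :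
    rSeq (-2*Real.cos (Real.pi/m)) a b m = (0, 0) := by
  rcases eq_or_lt_of_le hm with rfl | h3
  · have hcos : Real.cos (Real.pi/((2:ℕ):ℝ)) = 0 := by
      norm_num [Real.cos_pi_div_two]
    rw [hcos]
    norm_num [rSeq]
  · have hm3 : 3 ≤ m := h3
    have ht : (-2*Real.cos (Real.pi/m))^2 - 2 = 2*Real.cos (2*(Real.pi/m)) := by
      rw [Real.cos_two_mul]; ring
    rw [rSeq_closed, ht, S1_zero hm3, S2_zero hm3]
    norm_num

section Geom

variable {B : Type*} (M : CoxeterMatrix B)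

noncomputable def Cent (M : CoxeterMatrix B) (v w : B) : ℝ :=
  if M v w = 0 then -2 else -2 * Real.cos (Real.pi / (M v w : ℝ))

lemma Cent_symm (v w : B) : Cent M v w = Cent M w v := by rw [Cent, Cent, M.symmetric]

lemma Cent_self (v : B) : Cent M v v = 2 := by
  rw [Cent, M.diagonal]
  norm_num [Real.cos_pi]

noncomputable def cform (v : B) : (B →₀ ℝ) →ₗ[ℝ] ℝ :=
  Finsupp.linearCombination ℝ (fun w => Cent M w v)

lemma cform_single (v w : B) : cform M v (Finsupp.single w 1) = Cent M w v := by
  rw [cform, Finsupp.linearCombination_single, smul_eq_mul, one_mul]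

noncomputable def gRefl (v : B) : Module.End ℝ (B →₀ ℝ) :=
  LinearMap.id - (cform M v).smulRight (Finsupp.single v 1)

lemma gRefl_apply (v : B) (x : B →₀ ℝ) :
    gRefl M v x = x - (cform M v x) • Finsupp.single v 1 := by
  simp [gRefl]

lemma orbit (v w : B) (x : B →₀ ℝ) (k : ℕ) :
    ((gRefl M v * gRefl M w)^k) x
      = x + (rSeq (Cent M v w) (cform M v x) (cform M w x) k).1 • Finsupp.single v 1
          + (rSeq (Cent M v w) (cform M v x) (cform M w x) k).2 • Finsupp.single w 1 := by
  set c := Cent M v w with hc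
  set a := cform M v x with ha
  set b := cform M w x with hb
  induction k with
  | zero => simp [rSeq]
  | succ k ih =>
    rw [pow_succ', Module.End.mul_apply, ih, Module.End.mul_apply]
    set p := (rSeq c a b k).1 with hp
    set q := (rSeq c a b k).2 with hq
    have e1 : cform M w (x + p • Finsupp.single v 1 + q • Finsupp.single w 1)
        = b + p*c + q*2 := by
      simp only [map_add, map_smul, cform_single, Cent_self, smul_eq_mul, ← hb, ← hc]
      try ring
    have s1 : gRefl M w (x + p • Finsupp.single v 1 + q • Finsupp.single w 1)
        = x + p • Finsupp.single v 1 + (-q - b - c*p) • Finsupp.single w 1 := by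
      rw [gRefl_apply, e1]
      module
    rw [s1]
    have e2 : cform M v (x + p • Finsupp.single v 1 + (-q - b - c*p) • Finsupp.single w 1)
        = a + p*2 + (-q - b - c*p)*c := by
      simp only [map_add, map_smul, cform_single, Cent_self, smul_eq_mul, ← ha]
      rw [← Cent_symm, ← hc]
      try ring
    have s2 : gRefl M v (x + p • Finsupp.single v 1 + (-q - b - c*p) • Finsupp.single w 1)
        = x + (-p - a - c * (-q - b - c*p)) • Finsupp.single v 1
            + (-q - b - c*p) • Finsupp.single w 1 := by
      rw [gRefl_apply, e2]
      module
    rw [s2]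
    rw [show rSeq c a b (k+1) =
      (-(rSeq c a b k).1 - a - c * (-(rSeq c a b k).2 - b - c*(rSeq c a b k).1),
       -(rSeq c a b k).2 - b - c*(rSeq c a b k).1) from rfl, ← hp, ← hq]

lemma gRefl_liftable : CoxeterMatrix.IsLiftable M (gRefl M) := by
  intro v w
  rcases Nat.eq_zero_or_pos (M v w) with h0 | hpos
  · rw [h0, pow_zero]
  by_cases hvw : v = w
  · subst hvw
    rw [M.diagonal, pow_one]
    apply LinearMap.ext
    intro x
    rw [Module.End.mul_apply, gRefl_apply M v x, gRefl_apply, map_sub, map_smul,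
      cform_single, Cent_self, smul_eq_mul, Module.End.one_apply]
    module
  · have hm : 2 ≤ M v w := by
      have := M.off_diagonal v w hvw
      omega
    apply LinearMap.ext
    intro x
    rw [orbit]
    have hc : Cent M v w = -2*Real.cos (Real.pi/(M v w : ℝ)) := by
      rw [Cent, if_neg (by omega)]
      try ring
    rw [hc, rSeq_zero hm]
    simp

theorem simple_injective {W : Type*} [Group W] (cs : CoxeterSystem M W) {i j : B}
    (h : cs.simple i = cs.simple j) : i = j := by
  by_contra hij
  have hφ := congrArg (cs.lift ⟨gRefl M, gRefl_liftable M⟩) h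
  rw [CoxeterSystem.lift_apply_simple, CoxeterSystem.lift_apply_simple] at hφ
  have hx : gRefl M i (Finsupp.single i 1) = gRefl M j (Finsupp.single i 1) := by rw [hφ]
  have hcoord := congrArg (fun y : B →₀ ℝ => y i) hx
  simp only [gRefl_apply, cform_single, Cent_self, Finsupp.sub_apply, Finsupp.smul_apply,
    Finsupp.single_eq_same, smul_eq_mul] at hcoord
  rw [Finsupp.single_eq_of_ne' (Ne.symm hij)] at hcoord
  norm_num at hcoord

end Geom

end CoxAux


namespace CoxAux2

open List CoxeterSystem

set_option linter.unusedSectionVars false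

variable {B : Type*} {W : Type*} [Group W] [DecidableEq W] {M : CoxeterMatrix B}
  (cs : CoxeterSystem M W)

lemma shift_pow (x y : W) (r : ℕ) : x * (y * x)^r = (x * y)^r * x := by
  induction r with
  | zero => simp
  | succ r ih =>
    rw [pow_succ, ← mul_assoc, ih, pow_succ]
    simp [mul_assoc]

lemma simple_conj_simple_iff (i : B) (t : W) :
    (cs.simple i * t * cs.simple i = cs.simple i) ↔ (t = cs.simple i) := by
  constructor
  · intro h
    have h2 : cs.simple i * (t * cs.simple i) = cs.simple i * 1 := by
      rw [mul_one, ← mul_assoc]; exact h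
    have h3 := mul_left_cancel h2
    have h4 : t = (cs.simple i)⁻¹ := mul_eq_one_iff_eq_inv.mp h3
    rwa [cs.inv_simple] at h4
  · intro h
    rw [h, cs.simple_mul_simple_self, one_mul]

def etaFun (i : B) : W × ZMod 2 → W × ZMod 2 :=
  fun p => (cs.simple i * p.1 * cs.simple i, p.2 + if p.1 = cs.simple i then 1 else 0)

lemma etaFun_invol (i : B) : Function.Involutive (etaFun cs i) := by
  intro ⟨t, z⟩
  show (cs.simple i * (cs.simple i * t * cs.simple i) * cs.simple i,
    (z + if t = cs.simple i then 1 else 0)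
      + if cs.simple i * t * cs.simple i = cs.simple i then 1 else 0) = (t, z)
  rw [Prod.mk.injEq]
  constructor
  · rw [show cs.simple i * (cs.simple i * t * cs.simple i) * cs.simple i
      = (cs.simple i * cs.simple i) * t * (cs.simple i * cs.simple i) by group,
      cs.simple_mul_simple_self, one_mul, mul_one]
  · rw [if_congr (simple_conj_simple_iff cs i t) rfl rfl]
    by_cases h : t = cs.simple i
    · rw [if_pos h, add_assoc, show (1 : ZMod 2) + 1 = 0 by decide, add_zero]
    · rw [if_neg h, add_zero, add_zero]

def eta (i : B) : Equiv.Perm (W × ZMod 2) :=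
  Function.Involutive.toPerm (etaFun cs i) (etaFun_invol cs i)

lemma eta_apply (i : B) (p : W × ZMod 2) :
    eta cs i p = (cs.simple i * p.1 * cs.simple i,
      p.2 + if p.1 = cs.simple i then 1 else 0) := rfl

def etaProd (ω : List B) : Equiv.Perm (W × ZMod 2) := (ω.map (eta cs)).prod

@[simp] lemma etaProd_nil : etaProd cs ([] : List B) = 1 := rfl

lemma etaProd_cons (i : B) (ω : List B) :
    etaProd cs (i :: ω) = eta cs i * etaProd cs ω := by
  simp [etaProd]

lemma rightInvSeq_cons (i : B) (ω : List B) :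
    cs.rightInvSeq (i :: ω) =
      ((cs.wordProd ω)⁻¹ * cs.simple i * cs.wordProd ω) :: cs.rightInvSeq ω := rfl

lemma etaProd_apply (ω : List B) (t : W) (z : ZMod 2) :
    etaProd cs ω (t, z) = (cs.wordProd ω * t * (cs.wordProd ω)⁻¹,
      z + ((cs.rightInvSeq ω).count t : ZMod 2)) := by
  induction ω generalizing t z with
  | nil => simp
  | cons i ω ih =>
    rw [etaProd_cons, Equiv.Perm.mul_apply, ih, eta_apply]
    rw [Prod.mk.injEq]
    constructor
    · simp only [cs.wordProd_cons, mul_inv_rev, cs.inv_simple]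
      group
    · rw [rightInvSeq_cons, List.count_cons]
      have hiff : ((cs.wordProd ω)⁻¹ * cs.simple i * cs.wordProd ω = t)
          ↔ (cs.wordProd ω * t * (cs.wordProd ω)⁻¹ = cs.simple i) := by
        constructor
        · intro h; rw [← h]; group
        · intro h; rw [← h]; group
      simp only [beq_iff_eq]
      by_cases h : cs.wordProd ω * t * (cs.wordProd ω)⁻¹ = cs.simple i
      · rw [if_pos h, if_pos (hiff.mpr h)]; push_cast; ring
      · rw [if_neg h, if_neg (fun hh => h (hiff.mp hh))]; push_cast; ring

/-! braid word -/

def altW (i j : B) : ℕ → List B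
  | 0 => []
  | (r+1) => i :: j :: altW i j r

lemma wordProd_altW (i j : B) (r : ℕ) :
    cs.wordProd (altW i j r) = (cs.simple i * cs.simple j)^r := by
  induction r with
  | zero => simp [altW]
  | succ r ih =>
    rw [show altW i j (r+1) = i :: j :: altW i j r from rfl,
      cs.wordProd_cons, cs.wordProd_cons, ih, pow_succ']
    group

lemma etaProd_altW (i j : B) (r : ℕ) :
    etaProd cs (altW i j r) = (eta cs i * eta cs j)^r := by
  induction r with
  | zero => simp [altW]
  | succ r ih =>
    rw [show altW i j (r+1) = i :: j :: altW i j r from rfl,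
      etaProd_cons, etaProd_cons, ih, pow_succ']
    group

/-- the `g` sequence -/
def gSeq (i j : B) (k : ℕ) : W := (cs.simple j * cs.simple i)^k * cs.simple j

lemma inv_pow_simple (i j : B) (r : ℕ) :
    ((cs.simple i * cs.simple j)^r)⁻¹ = (cs.simple j * cs.simple i)^r := by
  rw [← inv_pow, mul_inv_rev, cs.inv_simple, cs.inv_simple]

lemma gA (i j : B) (r : ℕ) :
    (cs.wordProd (altW i j r))⁻¹ * cs.simple j * cs.wordProd (altW i j r)
      = gSeq cs i j (2*r) := by
  rw [wordProd_altW, inv_pow_simple, gSeq, mul_assoc,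
    shift_pow (cs.simple j) (cs.simple i) r, ← mul_assoc, ← pow_add, ← two_mul]

lemma gB (i j : B) (r : ℕ) :
    (cs.wordProd (j :: altW i j r))⁻¹ * cs.simple i * cs.wordProd (j :: altW i j r)
      = gSeq cs i j (2*r+1) := by
  rw [cs.wordProd_cons, wordProd_altW, mul_inv_rev, cs.inv_simple, inv_pow_simple, gSeq]
  rw [shift_pow (cs.simple j) (cs.simple i) r]
  rw [show 2*r+1 = r+1+r from by omega, pow_add, pow_add, pow_one]
  group

lemma ris_altW (i j : B) (r : ℕ) :
    cs.rightInvSeq (altW i j r) = (((List.range (2*r)).map (gSeq cs i j))).reverse := by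
  induction r with
  | zero => simp [altW]
  | succ r ih =>
    have h2 : 2*(r+1) = (2*r+1)+1 := by omega
    rw [h2, List.range_succ, show (2*r+1) = (2*r)+1 from rfl, List.range_succ]
    rw [show altW i j (r+1) = i :: j :: altW i j r from rfl,
      rightInvSeq_cons, rightInvSeq_cons, ih]
    rw [List.map_append, List.map_append, List.reverse_append, List.reverse_append]
    simp only [List.map_cons, List.map_nil, List.reverse_cons, List.reverse_nil,
      List.nil_append, List.cons_append, List.append_assoc]
    rw [gB cs i j r, gA cs i j r]

lemma count_ris_altW_even (i j : B) (t : W) :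
    (((cs.rightInvSeq (altW i j (M i j))).count t : ZMod 2)) = 0 := by
  have h1 : (cs.simple j * cs.simple i)^(M i j) = 1 := cs.simple_mul_simple_pow' i j
  rw [ris_altW, List.count_reverse, two_mul, List.range_add, List.map_append,
    List.count_append, List.map_map]
  have hcongr : (List.range (M i j)).map (gSeq cs i j ∘ (M i j + ·))
      = (List.range (M i j)).map (gSeq cs i j) := by
    apply List.map_congr_left
    intro k _
    show gSeq cs i j (M i j + k) = gSeq cs i j k
    rw [gSeq, gSeq, pow_add, h1, one_mul]
  rw [hcongr]
  push_cast
  have : ∀ x : ZMod 2, x + x = 0 := by decide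
  exact this _

lemma eta_liftable : CoxeterMatrix.IsLiftable M (eta cs) := by
  intro i j
  rcases Nat.eq_zero_or_pos (M i j) with h0 | _
  · rw [h0, pow_zero]
  · rw [← etaProd_altW]
    apply Equiv.ext
    rintro ⟨t, z⟩
    rw [etaProd_apply, wordProd_altW, cs.simple_mul_simple_pow]
    rw [count_ris_altW_even]
    simp

lemma lift_wordProd (ω : List B) :
    cs.lift ⟨eta cs, eta_liftable cs⟩ (cs.wordProd ω) = etaProd cs ω := by
  induction ω with
  | nil => simp
  | cons i ω ih =>
    rw [cs.wordProd_cons, map_mul, ih, cs.lift_apply_simple, etaProd_cons]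

lemma count_parity {ω ω' : List B} (h : cs.wordProd ω = cs.wordProd ω') (t : W) :
    (((cs.rightInvSeq ω).count t : ZMod 2)) = ((cs.rightInvSeq ω').count t : ZMod 2) := by
  have h2 : etaProd cs ω = etaProd cs ω' := by
    rw [← lift_wordProd, ← lift_wordProd, h]
  have h3 := congrArg (fun f : Equiv.Perm (W × ZMod 2) => (f (t, (0:ZMod 2))).2) h2
  simp only [etaProd_apply] at h3
  simpa using h3

lemma ris_dup_of_not_reduced {ω : List B} (h : ¬ cs.IsReduced ω) :
    ¬ (cs.rightInvSeq ω).Nodup := by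
  intro hnd
  obtain ⟨ω', hred, hw⟩ := cs.exists_reduced_word' (cs.wordProd ω)
  have hlen : ω'.length < ω.length := by
    have h1 : cs.length (cs.wordProd ω) ≤ ω.length := cs.length_wordProd_le ω
    have h2 : cs.length (cs.wordProd ω) ≠ ω.length := h
    have h3 : cs.length (cs.wordProd ω') = ω'.length := hred
    rw [← hw] at h3
    omega
  have hsub : cs.rightInvSeq ω ⊆ cs.rightInvSeq ω' := by
    intro u hu
    have hc1 : (cs.rightInvSeq ω).count u = 1 := List.count_eq_one_of_mem hnd hu
    have hpar := count_parity cs hw u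
    rw [hc1] at hpar
    by_contra hmem
    rw [List.count_eq_zero.mpr hmem] at hpar
    exact absurd hpar (by decide)
  have hc1 : (cs.rightInvSeq ω).toFinset.card = ω.length := by
    rw [List.toFinset_card_of_nodup hnd, cs.length_rightInvSeq]
  have hc2 : (cs.rightInvSeq ω').toFinset.card ≤ ω'.length := by
    rw [← cs.length_rightInvSeq ω']
    exact List.toFinset_card_le _
  have hsub' : (cs.rightInvSeq ω).toFinset ⊆ (cs.rightInvSeq ω').toFinset := by
    intro u hu
    rw [List.mem_toFinset] at hu ⊢
    exact hsub hu
  have := Finset.card_le_card hsub'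
  omega

open List in
lemma delete_two {ω : List B} (h : ¬ (cs.rightInvSeq ω).Nodup) :
    ∃ ω', ω' <+ ω ∧ ω'.length + 2 = ω.length ∧ cs.wordProd ω' = cs.wordProd ω := by
  rw [List.nodup_iff_getElem?_ne_getElem?] at h
  push_neg at h
  obtain ⟨j, j', j_lt_j', j'_lt_length, dup⟩ := h
  replace j'_lt_length : j' < List.length ω := by simpa using j'_lt_length
  rw [getElem?_eq_getElem (by simp; omega), getElem?_eq_getElem (by simp; omega)] at dup
  apply Option.some_injective at dup
  rw [← getD_eq_getElem _ 1, ← getD_eq_getElem _ 1] at dup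
  set! t := (cs.rightInvSeq ω).getD j 1 with h₁
  set! t' := (cs.rightInvSeq (ω.eraseIdx j)).getD (j' - 1) 1 with h₂
  have h₃ : t' = (cs.rightInvSeq ω).getD j' 1 := by
    rw [h₂, cs.getD_rightInvSeq, cs.getD_rightInvSeq,
      (Nat.sub_add_cancel (by omega) : j' - 1 + 1 = j'), eraseIdx_eq_take_drop_succ,
      List.drop_append, drop_of_length_le (by simp [j_lt_j'.le]), length_take,
      drop_drop, nil_append, min_eq_left_of_lt (j_lt_j'.trans j'_lt_length), Nat.add_comm,
      ← add_assoc, Nat.sub_add_cancel (by omega), mul_left_inj, mul_right_inj]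
    congr 2
    show (take j ω ++ drop (j + 1) ω)[j' - 1]? = ω[j']?
    rw [
      getElem?_append_right (by simp [Nat.le_sub_one_of_lt j_lt_j']), getElem?_drop]
    congr
    show j + 1 + (j' - 1 - List.length (take j ω)) = j'
    rw [length_take]
    omega
  have h₄ : t * t' = 1 := by
    rw [h₁, h₃, dup]
    exact cs.getD_rightInvSeq_mul_self _ _
  have h₅ := calc
    cs.wordProd ω = cs.wordProd ω * t * t' := by rw [mul_assoc, h₄]; group
    _ = (cs.wordProd (ω.eraseIdx j)) * t' :=
        congrArg (· * t') (cs.wordProd_mul_getD_rightInvSeq _ _)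
    _ = cs.wordProd ((ω.eraseIdx j).eraseIdx (j' - 1)) :=
        cs.wordProd_mul_getD_rightInvSeq _ _
  refine ⟨(ω.eraseIdx j).eraseIdx (j' - 1), ?_, ?_, h₅.symm⟩
  · exact (List.eraseIdx_sublist _ _).trans (List.eraseIdx_sublist _ _)
  · have hj : j < ω.length := by omega
    have e1 := List.length_eraseIdx_add_one hj
    have hj' : j' - 1 < (ω.eraseIdx j).length := by omega
    have e2 := List.length_eraseIdx_add_one hj'
    omega

lemma exists_reduced_sublist (n : ℕ) : ∀ ω : List B, ω.length ≤ n →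
    ∃ ω', ω' <+ ω ∧ cs.IsReduced ω' ∧ cs.wordProd ω' = cs.wordProd ω := by
  induction n with
  | zero =>
    intro ω hω
    rw [Nat.le_zero, List.length_eq_zero_iff] at hω
    subst hω
    exact ⟨[], List.Sublist.refl _, by simp [CoxeterSystem.IsReduced], rfl⟩
  | succ n ih =>
    intro ω hω
    by_cases hred : cs.IsReduced ω
    · exact ⟨ω, List.Sublist.refl _, hred, rfl⟩
    · obtain ⟨ω₁, hsub₁, hlen₁, hprod₁⟩ := delete_two cs (ris_dup_of_not_reduced cs hred)
      obtain ⟨ω', hsub', hred', hprod'⟩ := ih ω₁ (by omega)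
      exact ⟨ω', hsub'.trans hsub₁, hred', hprod'.trans hprod₁⟩

end CoxAux2


/-- Let `(W, cs)` be the Coxeter system of a Coxeter matrix `M` on `S`, and let `l` be a word
in which the letter `s` appears exactly once.  Then every reduced expression `t = (t₁, …, t_l)`
for the group element `cs.wordProd l` contains the letter `s`. -/
theorem mem_reduced_word_of_count_eq_one {S : Type*} [DecidableEq S] {M : CoxeterMatrix S}
    {W : Type*} [Group W] (cs : CoxeterSystem M W)
    (l : List S) (s : S) (hcount : l.count s = 1)
    (t : List S) (hred : cs.IsReduced t) (hprod : cs.wordProd t = cs.wordProd l) :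
    s ∈ t := by
  classical
  by_contra hst
  have hmem : s ∈ l := List.count_pos_iff.mp (by omega)
  obtain ⟨a, b, hl⟩ := List.append_of_mem hmem
  subst hl
  have hab : a.count s = 0 ∧ b.count s = 0 := by
    rw [List.count_append, List.count_cons_self] at hcount
    omega
  have hsa : s ∉ a := List.count_eq_zero.mp hab.1
  have hsb : s ∉ b := List.count_eq_zero.mp hab.2
  set ω := a.reverse ++ t ++ b.reverse with hω
  have hπ : cs.wordProd ω = cs.simple s := by
    rw [hω, cs.wordProd_append, cs.wordProd_append, cs.wordProd_reverse, cs.wordProd_reverse,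
      hprod, cs.wordProd_append, cs.wordProd_cons]
    group
  have hsω : s ∉ ω := by
    rw [hω]
    simp only [List.mem_append, List.mem_reverse]
    push_neg
    exact ⟨⟨hsa, hst⟩, hsb⟩
  obtain ⟨ω', hsub, hred', hprod'⟩ := CoxAux2.exists_reduced_sublist cs ω.length ω le_rfl
  have hlen1 : ω'.length = 1 := by
    have h1 : cs.length (cs.wordProd ω') = ω'.length := hred'
    rw [hprod', hπ, cs.length_simple] at h1
    omega
  obtain ⟨u, rfl⟩ := List.length_eq_one_iff.mp hlen1
  rw [cs.wordProd_singleton, hπ] at hprod'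
  have : u = s := CoxAux.simple_injective M cs hprod'
  subst this
  exact hsω (hsub.subset (List.mem_singleton_self u))
end

section
/- Let M be a Coxeter matrix on a type S such that M s t ≥ 3 or M s t = 0 (encoding ∞) for all s ≠ t, with associated Coxeter system (W, cs). Let (w_1, …, w_r) be a word in S that defines a pair partition V of {1, …, r}. Then cs.simple w_1 · … · cs.simple w_r = 1 in W if and only if V is non-crossing. -/
noncomputable section
namespace NCAux

open Real Finsupp

variable {S : Type*} (M : CoxeterMatrix S)

/-- entries of the bilinear form -/
def kk (i j : S) : ℝ := -Real.cos (Real.pi / (M i j : ℕ))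

lemma kk_diag (i : S) : kk M i i = 1 := by
  simp [kk, M.diagonal i]

lemma kk_symm (i j : S) : kk M i j = kk M j i := by
  rw [kk, kk, M.symmetric]

lemma kk_neg (hM : ∀ s t : S, s ≠ t → M s t = 0 ∨ 3 ≤ M s t) {i j : S} (h : i ≠ j) :
    kk M i j < 0 := by
  rcases hM i j h with h0 | h3
  · simp [kk, h0]
  · have hmpos : (0:ℝ) < (M i j : ℝ) := by exact_mod_cast Nat.lt_of_lt_of_le (by norm_num) h3
    have h1 : 0 < Real.pi / (M i j : ℝ) := div_pos Real.pi_pos hmpos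
    have h2 : Real.pi / (M i j : ℝ) < Real.pi / 2 := by
      apply div_lt_div_of_pos_left Real.pi_pos (by norm_num)
      exact_mod_cast Nat.lt_of_lt_of_le (by norm_num) h3
    have : 0 < Real.cos (Real.pi / (M i j : ℝ)) :=
      Real.cos_pos_of_mem_Ioo ⟨by linarith [Real.pi_pos], h2⟩
    simp only [kk]
    push_cast
    linarith

/-- basis vectors -/
def ee (i : S) : S →₀ ℝ := Finsupp.single i 1

/-- the linear functional `v ↦ B(eᵢ, v)` -/
def bf (i : S) : (S →₀ ℝ) →ₗ[ℝ] ℝ :=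
  Finsupp.lsum ℝ (fun j => (LinearMap.id : ℝ →ₗ[ℝ] ℝ).smulRight (kk M i j))

@[simp] lemma bf_ee (i j : S) : bf M i (ee j) = kk M i j := by
  simp [bf, ee]

/-- the reflection in `eᵢ` -/
def sg (i : S) : Module.End ℝ (S →₀ ℝ) :=
  LinearMap.id - (2:ℝ) • ((bf M i).smulRight (ee i))

lemma sg_apply (i : S) (v : S →₀ ℝ) : sg M i v = v - (2 * bf M i v) • ee i := by
  simp [sg, LinearMap.smulRight_apply, smul_smul]

lemma sg_apply_coord {i y : S} (h : y ≠ i) (v : S →₀ ℝ) : (sg M i v) y = v y := by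
  rw [sg_apply]
  simp [ee, Finsupp.single_apply, h.symm]

lemma bf_sg (i : S) (v : S →₀ ℝ) : bf M i (sg M i v) = - bf M i v := by
  rw [sg_apply]
  simp [kk_diag]
  ring

lemma sg_sg (i : S) (v : S →₀ ℝ) : sg M i (sg M i v) = v := by
  conv_lhs => rw [sg_apply M i (sg M i v), bf_sg, sg_apply]
  have : (2 * -(bf M i) v) = -(2 * (bf M i) v) := by ring
  rw [this, neg_smul, sub_neg_eq_add, sub_add_cancel]

lemma sg_ee_self (i : S) : sg M i (ee i) = - ee i := by
  rw [sg_apply]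
  simp [kk_diag]
  rw [two_smul]
  abel


/-- Chebyshev-like sequence -/
def cheb (t : ℝ) : ℕ → ℝ
  | 0 => 0
  | 1 => 1
  | n+2 => t * cheb t (n+1) - cheb t n

lemma cheb_sin (θ : ℝ) (n : ℕ) :
    cheb (4*(Real.cos θ)^2 - 2) n * Real.sin (2*θ) = Real.sin (2*(n:ℝ)*θ) := by
  set P : ℕ → Prop := fun n => cheb (4*(Real.cos θ)^2 - 2) n * Real.sin (2*θ) = Real.sin (2*(n:ℝ)*θ)
    with hP
  suffices h : ∀ n, P n ∧ P (n+1) from (h n).1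
  intro n
  induction n with
  | zero =>
    constructor
    · show cheb _ 0 * _ = _
      simp [cheb]
    · show cheb _ 1 * _ = _
      simp [cheb]
  | succ n ih =>
    refine ⟨ih.2, ?_⟩
    have hn : cheb (4*(Real.cos θ)^2 - 2) n * Real.sin (2*θ) = Real.sin (2*(n:ℝ)*θ) := ih.1
    have hn1 : cheb (4*(Real.cos θ)^2 - 2) (n+1) * Real.sin (2*θ)
        = Real.sin (2*((n:ℝ)+1)*θ) := by
      have := ih.2; rw [hP] at this; push_cast at this; exact this
    show cheb _ (n+2) * _ = _
    have hc : cheb (4*(Real.cos θ)^2 - 2) (n+2)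
        = (4*(Real.cos θ)^2 - 2) * cheb (4*(Real.cos θ)^2 - 2) (n+1)
          - cheb (4*(Real.cos θ)^2 - 2) n := rfl
    have h1 : (2:ℝ)*((n:ℝ)+1+1)*θ = 2*((n:ℝ)+1)*θ + 2*θ := by ring
    have h2 : (2:ℝ)*(n:ℝ)*θ = 2*((n:ℝ)+1)*θ - 2*θ := by ring
    have e1 : Real.sin (2*((n:ℝ)+1+1)*θ)
        = Real.sin (2*((n:ℝ)+1)*θ) * Real.cos (2*θ) + Real.cos (2*((n:ℝ)+1)*θ) * Real.sin (2*θ) := by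
      rw [h1, Real.sin_add]
    have e2 : Real.sin (2*(n:ℝ)*θ)
        = Real.sin (2*((n:ℝ)+1)*θ) * Real.cos (2*θ) - Real.cos (2*((n:ℝ)+1)*θ) * Real.sin (2*θ) := by
      rw [h2, Real.sin_sub]
    have e3 : Real.cos (2*θ) = 2 * (Real.cos θ)^2 - 1 := Real.cos_two_mul θ
    have goalcast : ((n:ℝ)+1+1) = ((n+2 : ℕ) : ℝ) := by push_cast; ring
    rw [hc, ← goalcast]
    linear_combination (4*(Real.cos θ)^2 - 2) * hn1 - hn - e1 - e2
      - 2*Real.sin (2*((n:ℝ)+1)*θ) * e3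



section Dihedral

variable {S : Type*} (M : CoxeterMatrix S)

lemma plane_step {i j : S} (c : ℝ) (hcij : kk M i j = -c) (hcji : kk M j i = -c) (x y : ℝ) :
    (sg M i * sg M j) (x • ee i + y • ee j)
      = ((4*c^2-1)*x - 2*c*y) • ee i + (2*c*x - y) • ee j := by
  have h1 : bf M j (x • ee i + y • ee j) = -c*x + y := by
    simp [map_add, map_smul, hcji, kk_diag]; ring
  have h2 : sg M j (x • ee i + y • ee j) = x • ee i + (2*c*x - y) • ee j := by
    rw [sg_apply, h1]
    module
  have h3 : bf M i (x • ee i + (2*c*x - y) • ee j) = x - c*(2*c*x - y) := by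
    simp [map_add, map_smul, hcij, kk_diag]; ring
  rw [Module.End.mul_apply, h2, sg_apply, h3]
  module

lemma plane_pow {i j : S} (c : ℝ) (hcij : kk M i j = -c) (hcji : kk M j i = -c) :
    ∀ (n : ℕ) (x y : ℝ), ((sg M i * sg M j)^(n+1)) (x • ee i + y • ee j)
      = (cheb (4*c^2-2) (n+1) * ((4*c^2-1)*x - 2*c*y) - cheb (4*c^2-2) n * x) • ee i
        + (cheb (4*c^2-2) (n+1) * (2*c*x - y) - cheb (4*c^2-2) n * y) • ee j := by
  intro n
  induction n with
  | zero =>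
    intro x y
    rw [pow_one, plane_step M c hcij hcji]
    show _ = (cheb _ 1 * _ - cheb _ 0 * _) • _ + (cheb _ 1 * _ - cheb _ 0 * _) • _
    simp [cheb]
  | succ n ih =>
    intro x y
    have hstep : ((sg M i * sg M j)^(n+2)) (x • ee i + y • ee j)
        = ((sg M i * sg M j)^(n+1)) ((sg M i * sg M j) (x • ee i + y • ee j)) := by
      rw [pow_succ, Module.End.mul_apply]
    rw [hstep, plane_step M c hcij hcji, ih]
    have hch : cheb (4*c^2-2) (n+2) = (4*c^2-2) * cheb (4*c^2-2) (n+1) - cheb (4*c^2-2) n := rfl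
    rw [hch]
    module

lemma fixed_pow {i j : S} (w : S →₀ ℝ) (hbi : bf M i w = 0) (hbj : bf M j w = 0) (n : ℕ) :
    ((sg M i * sg M j)^n) w = w := by
  induction n with
  | zero => simp
  | succ n ih =>
    rw [pow_succ, Module.End.mul_apply]
    have h1 : sg M j w = w := by rw [sg_apply, hbj]; simp
    have h2 : (sg M i * sg M j) w = w := by
      rw [Module.End.mul_apply, h1, sg_apply, hbi]; simp
    rw [h2, ih]

theorem sg_liftable (hM : ∀ s t : S, s ≠ t → M s t = 0 ∨ 3 ≤ M s t) :
    CoxeterMatrix.IsLiftable M (sg M) := by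
  intro i j
  rcases eq_or_ne i j with rfl | hij
  · rw [M.diagonal, pow_one]
    exact LinearMap.ext fun v => sg_sg M i v
  rcases hM i j hij with h0 | h3
  · rw [h0, pow_zero]
  -- main dihedral case
  set m : ℕ := M i j with hm
  set θ : ℝ := Real.pi / m with hθ
  set c : ℝ := Real.cos θ with hc
  have hm0 : (0:ℝ) < (m:ℝ) := by exact_mod_cast Nat.lt_of_lt_of_le (by norm_num) h3
  have hθpos : 0 < θ := div_pos Real.pi_pos hm0
  have hθle : θ ≤ Real.pi / 3 := by
    rw [hθ]
    apply div_le_div_of_nonneg_left Real.pi_pos.le (by norm_num)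
    exact_mod_cast h3
  have h2θ : 0 < 2*θ ∧ 2*θ < Real.pi := by
    constructor
    · linarith
    · have : Real.pi / 3 < Real.pi / 2 := by
        apply div_lt_div_of_pos_left Real.pi_pos <;> norm_num
      linarith
  have hs2 : Real.sin (2*θ) ≠ 0 :=
    ne_of_gt (Real.sin_pos_of_pos_of_lt_pi h2θ.1 h2θ.2)
  have hcij : kk M i j = -c := by rw [kk, hc, hθ, hm]
  have hcji : kk M j i = -c := by rw [kk_symm]; exact hcij
  have hc1 : c < 1 := by
    rw [hc]
    calc Real.cos θ < Real.cos 0 := by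
          apply Real.cos_lt_cos_of_nonneg_of_le_pi le_rfl ?_ hθpos
          linarith [Real.pi_pos, h2θ.2]
      _ = 1 := Real.cos_zero
  have hcpos : 0 < c := by
    rw [hc]
    apply Real.cos_pos_of_mem_Ioo
    constructor
    · linarith [Real.pi_pos]
    · have : Real.pi / 3 < Real.pi / 2 := by
        apply div_lt_div_of_pos_left Real.pi_pos <;> norm_num
      linarith
  have hD : (1:ℝ) - c^2 ≠ 0 := by nlinarith
  -- values of cheb at m and m-1
  have hum : cheb (4*c^2-2) m = 0 := by
    have := cheb_sin θ m
    have hang : 2*(m:ℝ)*θ = 2*Real.pi := by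
      rw [hθ]; field_simp
    rw [hang] at this
    rw [Real.sin_two_pi] at this
    rcases mul_eq_zero.mp this with h | h
    · exact h
    · exact absurd h hs2
  obtain ⟨n, hn⟩ : ∃ n, m = n + 3 := ⟨m - 3, by omega⟩
  have hum1 : cheb (4*c^2-2) (n+2) = -1 := by
    have := cheb_sin θ (n+2)
    have hang : 2*((n+2:ℕ):ℝ)*θ = 2*Real.pi - 2*θ := by
      have : ((n:ℝ)+3) * θ = Real.pi := by
        rw [hθ]
        have : ((n:ℝ)+3) = (m:ℝ) := by rw [hn]; push_cast; ring
        rw [this]; field_simp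
      push_cast
      linarith
    rw [hang, Real.sin_sub, Real.sin_two_pi, Real.cos_two_pi] at this
    have h' : cheb (4*c^2-2) (n+2) * Real.sin (2*θ) = (-1) * Real.sin (2*θ) := by
      rw [this]; ring
    exact mul_right_cancel₀ hs2 h'
  -- final extensionality
  refine LinearMap.ext fun v => ?_
  rw [Module.End.one_apply]
  set P : ℝ := bf M i v with hP
  set Q : ℝ := bf M j v with hQ
  set x : ℝ := (P + c*Q)/(1 - c^2) with hx
  set y : ℝ := (c*P + Q)/(1 - c^2) with hy
  set w : S →₀ ℝ := v - (x • ee i + y • ee j) with hw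
  have hbiw : bf M i w = 0 := by
    rw [hw]
    simp only [map_sub, map_add, map_smul, bf_ee, kk_diag, hcij, smul_eq_mul]
    rw [hx, hy]
    field_simp
    ring
  have hbjw : bf M j w = 0 := by
    rw [hw]
    simp only [map_sub, map_add, map_smul, bf_ee, kk_diag, hcji, smul_eq_mul]
    rw [hx, hy]
    field_simp
    ring
  have hv : v = (x • ee i + y • ee j) + w := by rw [hw]; abel
  have hsplit : ((sg M i * sg M j)^m) v
      = ((sg M i * sg M j)^m) (x • ee i + y • ee j) + ((sg M i * sg M j)^m) w := by
    rw [hv, map_add]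
  rw [hsplit, fixed_pow M w hbiw hbjw]
  have hplane : ((sg M i * sg M j)^m) (x • ee i + y • ee j) = x • ee i + y • ee j := by
    have hm' : m = (n+2) + 1 := by omega
    rw [hm', plane_pow M c hcij hcji (n+2) x y]
    rw [← hm', hum]
    have : cheb (4*c^2-2) (n+2) = -1 := hum1
    rw [this]
    ring_nf
  rw [hplane, ← hv]

end Dihedral


section Words

variable {S : Type*} (M : CoxeterMatrix S)

/-- product of reflections along a word -/
def TT (l : List S) : Module.End ℝ (S →₀ ℝ) := (l.map (sg M)).prod

@[simp] lemma TT_nil : TT M ([] : List S) = 1 := rfl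

lemma TT_cons (x : S) (l : List S) : TT M (x :: l) = sg M x * TT M l := by
  simp [TT]

lemma TT_append (l₁ l₂ : List S) : TT M (l₁ ++ l₂) = TT M l₁ * TT M l₂ := by
  simp [TT]

lemma TT_coord (l : List S) {y : S} (hy : y ∉ l) (v : S →₀ ℝ) : (TT M l v) y = v y := by
  induction l with
  | nil => rfl
  | cons x t ih =>
    have hyx : y ≠ x := fun h => hy (h ▸ (List.mem_cons_self (a := x) (l := t)))
    have hyt : y ∉ t := fun h => hy (List.mem_cons_of_mem x h)
    rw [TT_cons, Module.End.mul_apply, sg_apply_coord M hyx, ih hyt]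

lemma sg_mul_self (i : S) : sg M i * sg M i = 1 :=
  LinearMap.ext fun v => sg_sg M i v

lemma TT_mul_rev (l : List S) : TT M l * TT M l.reverse = 1 := by
  induction l with
  | nil => simp
  | cons x t ih =>
    rw [TT_cons, List.reverse_cons, TT_append]
    have h1 : TT M [x] = sg M x := by simp [TT]
    rw [h1]
    calc sg M x * TT M t * (TT M t.reverse * sg M x)
        = sg M x * (TT M t * TT M t.reverse) * sg M x := by simp only [mul_assoc]
      _ = sg M x * sg M x := by rw [ih, mul_one]
      _ = 1 := sg_mul_self M x

lemma TT_rev_mul (l : List S) : TT M l.reverse * TT M l = 1 := by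
  have := TT_mul_rev M l.reverse
  rwa [List.reverse_reverse] at this

lemma TT_rotate {l₁ l₂ : List S} (h : TT M (l₁ ++ l₂) = 1) : TT M (l₂ ++ l₁) = 1 := by
  rw [TT_append] at h ⊢
  calc TT M l₂ * TT M l₁
      = (TT M l₂ * TT M l₁) * (TT M l₂ * TT M l₂.reverse) := by rw [TT_mul_rev, mul_one]
    _ = TT M l₂ * (TT M l₁ * TT M l₂) * TT M l₂.reverse := by simp only [mul_assoc]
    _ = TT M l₂ * TT M l₂.reverse := by rw [h, mul_one]
    _ = 1 := TT_mul_rev M l₂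

lemma TT_pos [DecidableEq S] (hM : ∀ s t : S, s ≠ t → M s t = 0 ∨ 3 ≤ M s t) (a : S) :
    ∀ (μ : List S), μ.Nodup → a ∉ μ →
    ∃ f : S → ℝ, (∀ x ∈ μ, 0 < f x) ∧
      TT M μ (ee a) = ee a + ∑ x ∈ μ.toFinset, f x • ee x := by
  intro μ
  induction μ with
  | nil =>
    intro _ _
    exact ⟨0, by simp, by simp⟩
  | cons x t ih =>
    intro hnd ha
    have hxt : x ∉ t := (List.nodup_cons.mp hnd).1
    have hat : a ∉ t := fun h => ha (List.mem_cons_of_mem x h)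
    have hxa : x ≠ a := fun h => ha (h ▸ (List.mem_cons_self (a := x) (l := t)))
    obtain ⟨f, hf, hu⟩ := ih (List.nodup_cons.mp hnd).2 hat
    set u : S →₀ ℝ := ee a + ∑ y ∈ t.toFinset, f y • ee y with hudef
    have hbneg : bf M x u < 0 := by
      rw [hudef]
      rw [map_add, map_sum]
      have h1 : bf M x (ee a) < 0 := by rw [bf_ee]; exact kk_neg M hM hxa
      have h2 : ∑ y ∈ t.toFinset, bf M x (f y • ee y) ≤ 0 := by
        apply Finset.sum_nonpos
        intro y hy
        have hyt : y ∈ t := List.mem_toFinset.mp hy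
        have hxy : x ≠ y := fun h => hxt (h ▸ hyt)
        rw [map_smul, bf_ee, smul_eq_mul]
        exact le_of_lt (mul_neg_of_pos_of_neg (hf y hyt) (kk_neg M hM hxy))
      linarith
    refine ⟨fun y => if y = x then -(2 * bf M x u) else f y, ?_, ?_⟩
    · intro y hy
      dsimp only
      rcases List.mem_cons.mp hy with rfl | hyt
      · rw [if_pos rfl]; linarith
      · have hyx : y ≠ x := fun h => hxt (h ▸ hyt)
        rw [if_neg hyx]; exact hf y hyt
    · rw [TT_cons, Module.End.mul_apply, hu, sg_apply]
      have htf : (x :: t).toFinset = insert x t.toFinset := by simp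
      rw [htf, Finset.sum_insert (by simpa using hxt)]
      dsimp only
      have hcongr : ∑ y ∈ t.toFinset, (if y = x then -(2 * bf M x u) else f y) • ee y
          = ∑ y ∈ t.toFinset, f y • ee y := by
        apply Finset.sum_congr rfl
        intro y hy
        have hyx : y ≠ x := fun h => hxt (h ▸ List.mem_toFinset.mp hy)
        rw [if_neg hyx]
      rw [if_pos rfl, hcongr, hudef]
      rw [neg_smul]
      abel

theorem contra [DecidableEq S] (hM : ∀ s t : S, s ≠ t → M s t = 0 ∨ 3 ≤ M s t) {a : S} {μ ν : List S}
    (hμne : μ ≠ []) (hnd : μ.Nodup) (haμ : a ∉ μ) (haν : a ∉ ν)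
    (hT : TT M (a :: (μ ++ a :: ν)) = 1) : False := by
  have hexp : sg M a * TT M μ * sg M a * TT M ν = 1 := by
    rw [← hT, TT_cons, TT_append, TT_cons]
    simp only [mul_assoc]
  have hGr : sg M a * TT M μ * sg M a = TT M ν.reverse := by
    calc sg M a * TT M μ * sg M a
        = (sg M a * TT M μ * sg M a) * (TT M ν * TT M ν.reverse) := by
          rw [TT_mul_rev, mul_one]
      _ = (sg M a * TT M μ * sg M a * TT M ν) * TT M ν.reverse := by
          simp only [mul_assoc]
      _ = TT M ν.reverse := by rw [hexp, one_mul]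
  obtain ⟨f, hf, hu⟩ := TT_pos M hM a μ hnd haμ
  set u : S →₀ ℝ := ee a + ∑ x ∈ μ.toFinset, f x • ee x with hudef
  have hua : u a = 1 := by
    rw [hudef, Finsupp.add_apply]
    have h1 : (ee a) a = 1 := Finsupp.single_eq_same
    have h2 : (∑ x ∈ μ.toFinset, f x • ee x) a = 0 := by
      rw [Finsupp.finset_sum_apply]
      apply Finset.sum_eq_zero
      intro x hx
      have hxa : x ≠ a := fun h => haμ (h ▸ List.mem_toFinset.mp hx)
      rw [Finsupp.smul_apply, ee, Finsupp.single_apply, if_neg hxa, smul_zero]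
    rw [h1, h2, add_zero]
  have hbu : bf M a u < 1 := by
    rw [hudef, map_add, map_sum, bf_ee, kk_diag]
    have h2 : ∑ x ∈ μ.toFinset, bf M a (f x • ee x) < 0 := by
      apply Finset.sum_neg
      · intro x hx
        have hxμ : x ∈ μ := List.mem_toFinset.mp hx
        have hax : a ≠ x := fun h => haμ (h ▸ hxμ)
        rw [map_smul, bf_ee, smul_eq_mul]
        exact mul_neg_of_pos_of_neg (hf x hxμ) (kk_neg M hM hax)
      · rw [Finset.nonempty_iff_ne_empty]
        intro hemp
        apply hμne
        rcases μ with _ | ⟨x, t⟩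
        · rfl
        · exfalso
          have : x ∈ (x :: t).toFinset := by simp
          rw [hemp] at this
          simp at this
    linarith
  -- evaluate both sides at (ee a), coordinate a
  have heval := congrArg (fun F : Module.End ℝ (S →₀ ℝ) => (F (ee a)) a) hGr
  have hrhs : (TT M ν.reverse (ee a)) a = 1 := by
    rw [TT_coord M ν.reverse (by simpa using haν), ee, Finsupp.single_eq_same]
  have hlhs : ((sg M a * TT M μ * sg M a) (ee a)) a = -1 + 2 * bf M a u := by
    rw [Module.End.mul_apply, Module.End.mul_apply, sg_ee_self, map_neg, hu]
    rw [sg_apply, map_neg]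
    rw [Finsupp.sub_apply, Finsupp.neg_apply, Finsupp.smul_apply]
    rw [ee, Finsupp.single_eq_same, hua]
    simp only [smul_eq_mul]
    ring
  rw [hlhs, hrhs] at heval
  linarith

end Words


section Comb

variable {S : Type*}

/-- pair word: every letter occurring occurs exactly twice -/
def Pair [DecidableEq S] (l : List S) : Prop := ∀ x ∈ l, l.count x = 2

/-- crossing (index form) -/
def Cross (l : List S) : Prop := ∃ i k j m : ℕ, i < k ∧ k < j ∧ j < m ∧ m < l.length ∧
  l[i]? = l[j]? ∧ l[k]? = l[m]? ∧ l[i]? ≠ l[k]?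

lemma get_shift (u v : List S) (n : ℕ) : (u ++ v)[u.length + n]? = v[n]? := by
  rw [List.getElem?_append_right (Nat.le_add_right _ _)]
  congr 1
  omega

lemma get_at (u v : List S) (a : S) : (u ++ a :: v)[u.length]? = some a := by
  have := get_shift u (a :: v) 0
  simpa using this

lemma get_cons_shift (u v : List S) (a : S) (n : ℕ) :
    (u ++ a :: v)[u.length + (1 + n)]? = v[n]? := by
  rw [get_shift]
  rw [(by omega : 1 + n = n + 1), List.getElem?_cons_succ]

lemma cross_of_pattern (q₁ q₂ q₃ q₄ q₅ : List S) {A B : S} (hAB : A ≠ B) :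
    Cross (q₁ ++ A :: (q₂ ++ B :: (q₃ ++ A :: (q₄ ++ B :: q₅)))) := by
  set l := q₁ ++ A :: (q₂ ++ B :: (q₃ ++ A :: (q₄ ++ B :: q₅))) with hl
  refine ⟨q₁.length, q₁.length + (1 + q₂.length),
    q₁.length + (1 + (q₂.length + (1 + q₃.length))),
    q₁.length + (1 + (q₂.length + (1 + (q₃.length + (1 + q₄.length))))),
    by omega, by omega, by omega, ?_, ?_, ?_, ?_⟩
  · rw [hl]; simp [List.length_append]; omega
  · rw [hl, get_at, get_cons_shift, get_cons_shift, get_at]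
  · rw [hl, get_cons_shift, get_at, get_cons_shift, get_cons_shift, get_cons_shift, get_at]
  · rw [hl, get_at, get_cons_shift, get_at]
    simp only [Ne, Option.some_inj]
    exact hAB

lemma mem_of_get? {l : List S} {q : ℕ} {a : S} (h : l[q]? = some a) : a ∈ l := by
  obtain ⟨h1, h2⟩ := List.getElem?_eq_some_iff.mp h
  exact h2 ▸ List.getElem_mem h1

lemma two_split {y : S} [DecidableEq S] :
    ∀ {l : List S}, 2 ≤ l.count y → ∃ m₁ m₂ m₃, l = m₁ ++ y :: m₂ ++ y :: m₃ := by
  intro l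
  induction l with
  | nil => intro h; simp at h
  | cons z t ih =>
    intro h
    by_cases hz : z = y
    · rw [hz, List.count_cons_self] at h
      have hyt : 0 < t.count y := by omega
      have : y ∈ t := List.count_pos_iff.mp hyt
      obtain ⟨s, t', ht⟩ := List.append_of_mem this
      exact ⟨[], s, t', by rw [hz, ht]; simp⟩
    · rw [List.count_cons_of_ne hz] at h
      obtain ⟨m₁, m₂, m₃, rfl⟩ := ih h
      exact ⟨z :: m₁, m₂, m₃, by simp⟩

/-- conversion across deleting an adjacent equal pair -/
lemma get_del_lt {l₁ l₃ : List S} (x : S) {q : ℕ} (h : q < l₁.length) :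
    (l₁ ++ l₃)[q]? = (l₁ ++ x :: x :: l₃)[q]? := by
  rw [List.getElem?_append_left h, List.getElem?_append_left h]

lemma get_del_ge {l₁ l₃ : List S} (x : S) {q : ℕ} (h : l₁.length ≤ q) :
    (l₁ ++ l₃)[q]? = (l₁ ++ x :: x :: l₃)[q + 2]? := by
  rw [List.getElem?_append_right h, List.getElem?_append_right (by omega : l₁.length ≤ q + 2)]
  have h2 : q + 2 - l₁.length = (q - l₁.length) + 1 + 1 := by omega
  rw [h2, List.getElem?_cons_succ, List.getElem?_cons_succ]

lemma letter_pos {l₁ l₃ : List S} {x : S} {q : ℕ} (hx1 : x ∉ l₁) (hx3 : x ∉ l₃)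
    (h : (l₁ ++ x :: x :: l₃)[q]? = some x) : q = l₁.length ∨ q = l₁.length + 1 := by
  by_contra hcon
  push_neg at hcon
  rcases Nat.lt_or_ge q l₁.length with hlt | hge
  · rw [List.getElem?_append_left hlt] at h
    exact hx1 (mem_of_get? h)
  · have hge2 : l₁.length + 2 ≤ q := by omega
    rw [List.getElem?_append_right hge] at h
    have h2 : q - l₁.length = (q - l₁.length - 2) + 1 + 1 := by omega
    rw [h2, List.getElem?_cons_succ, List.getElem?_cons_succ] at h
    exact hx3 (mem_of_get? h)

lemma cross_ins {l₁ l₃ : List S} (x : S) (h : Cross (l₁ ++ l₃)) :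
    Cross (l₁ ++ x :: x :: l₃) := by
  obtain ⟨i, k, j, m, h1, h2, h3, h4, h5, h6, h7⟩ := h
  set c := l₁.length with hc
  have hlen : (l₁ ++ l₃).length = l₁.length + l₃.length := by simp
  set ψ : ℕ → ℕ := fun q => if q < c then q else q + 2 with hψ
  have hmono : ∀ p q, p < q → ψ p < ψ q := by
    intro p q hpq
    rw [hψ]
    dsimp only
    split <;> split <;> omega
  have hlet : ∀ q, q < (l₁ ++ l₃).length → (l₁ ++ l₃)[q]? = (l₁ ++ x :: x :: l₃)[ψ q]? := by
    intro q hq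
    rw [hψ]
    dsimp only
    split
    · exact get_del_lt x (by omega)
    · exact get_del_ge x (by omega)
  refine ⟨ψ i, ψ k, ψ j, ψ m, hmono _ _ h1, hmono _ _ h2, hmono _ _ h3, ?_, ?_, ?_, ?_⟩
  · have : (l₁ ++ x :: x :: l₃).length = l₁.length + l₃.length + 2 := by simp; omega
    rw [this, hψ]
    dsimp only
    split <;> omega
  · rw [← hlet i (by omega), ← hlet j (by omega)]; exact h5
  · rw [← hlet k (by omega), ← hlet m (by omega)]; exact h6
  · rw [← hlet i (by omega), ← hlet k (by omega)]; exact h7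

lemma cross_del {l₁ l₃ : List S} {x : S} (hx1 : x ∉ l₁) (hx3 : x ∉ l₃)
    (h : Cross (l₁ ++ x :: x :: l₃)) : Cross (l₁ ++ l₃) := by
  obtain ⟨i, k, j, m, h1, h2, h3, h4, h5, h6, h7⟩ := h
  set c := l₁.length with hc
  have hcx : (l₁ ++ x :: x :: l₃)[c]? = some x := get_at l₁ (x :: l₃) x
  have hcx1 : (l₁ ++ x :: x :: l₃)[c + 1]? = some x := by
    have := get_cons_shift l₁ (x :: l₃) x 0
    exact this
  -- none of the four indices is c or c+1
  have hblock : ∀ p q : ℕ, p < q →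
      (l₁ ++ x :: x :: l₃)[p]? = (l₁ ++ x :: x :: l₃)[q]? →
      ((p = c ∨ p = c + 1) ∨ (q = c ∨ q = c + 1)) → p = c ∧ q = c + 1 := by
    intro p q hpq heq hor
    have hxval : (l₁ ++ x :: x :: l₃)[p]? = some x := by
      rcases hor with (rfl | rfl) | (rfl | rfl)
      · exact hcx
      · exact hcx1
      · rw [heq]; exact hcx
      · rw [heq]; exact hcx1
    have hp := letter_pos hx1 hx3 hxval
    have hq := letter_pos hx1 hx3 (heq ▸ hxval)
    omega
  have hi : i ≠ c ∧ i ≠ c + 1 := by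
    by_contra hcon
    push_neg at hcon
    have := hblock i j (by omega) h5 (by tauto)
    omega
  have hj : j ≠ c ∧ j ≠ c + 1 := by
    by_contra hcon
    push_neg at hcon
    have := hblock i j (by omega) h5 (by tauto)
    omega
  have hk : k ≠ c ∧ k ≠ c + 1 := by
    by_contra hcon
    push_neg at hcon
    have := hblock k m (by omega) h6 (by tauto)
    omega
  have hm : m ≠ c ∧ m ≠ c + 1 := by
    by_contra hcon
    push_neg at hcon
    have := hblock k m (by omega) h6 (by tauto)
    omega
  set φ : ℕ → ℕ := fun q => if q < c then q else q - 2 with hφ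
  have hlen2 : (l₁ ++ x :: x :: l₃).length = l₁.length + l₃.length + 2 := by simp; omega
  have hlet : ∀ q, q ≠ c → q ≠ c + 1 →
      (l₁ ++ x :: x :: l₃)[q]? = (l₁ ++ l₃)[φ q]? := by
    intro q hq1 hq2
    rw [hφ]
    dsimp only
    split
    · exact (get_del_lt x (by omega)).symm
    · have : q = (q - 2) + 2 := by omega
      rw [this]
      exact (get_del_ge x (by omega)).symm
  have hmono : ∀ p q, p ≠ c → p ≠ c+1 → q ≠ c → q ≠ c+1 → p < q → φ p < φ q := by
    intro p q hp1 hp2 hq1 hq2 hpq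
    rw [hφ]
    dsimp only
    split <;> split <;> omega
  refine ⟨φ i, φ k, φ j, φ m,
    hmono _ _ hi.1 hi.2 hk.1 hk.2 h1,
    hmono _ _ hk.1 hk.2 hj.1 hj.2 h2,
    hmono _ _ hj.1 hj.2 hm.1 hm.2 h3, ?_, ?_, ?_, ?_⟩
  · have : (l₁ ++ l₃).length = l₁.length + l₃.length := by simp
    rw [this, hφ]
    dsimp only
    split <;> omega
  · rw [← hlet i hi.1 hi.2, ← hlet j hj.1 hj.2]; exact h5
  · rw [← hlet k hk.1 hk.2, ← hlet m hm.1 hm.2]; exact h6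
  · rw [← hlet i hi.1 hi.2, ← hlet k hk.1 hk.2]; exact h7


lemma pair_del [DecidableEq S] {l₁ l₃ : List S} {x : S}
    (hp : Pair (l₁ ++ x :: x :: l₃)) (hx1 : x ∉ l₁) (hx3 : x ∉ l₃) : Pair (l₁ ++ l₃) := by
  intro y hy
  have hyx : y ≠ x := by
    rintro rfl
    rcases List.mem_append.mp hy with h | h
    · exact hx1 h
    · exact hx3 h
  have hymem : y ∈ l₁ ++ x :: x :: l₃ := by
    rcases List.mem_append.mp hy with h | h
    · exact List.mem_append.mpr (Or.inl h)
    · exact List.mem_append.mpr (Or.inr (by simp [h]))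
  have h2 := hp y hymem
  rw [List.count_append, List.count_cons_of_ne hyx.symm, List.count_cons_of_ne hyx.symm] at h2
  rw [List.count_append]
  exact h2

lemma min_gap [DecidableEq S] {l : List S} (hp : Pair l) (hne : l ≠ []) :
    (∃ (x : S) (l₁ l₃ : List S), l = l₁ ++ x :: x :: l₃ ∧ x ∉ l₁ ∧ x ∉ l₃) ∨
    (∃ (x : S) (l₁ l₂ l₃ : List S), l = l₁ ++ x :: (l₂ ++ x :: l₃) ∧ l₂ ≠ [] ∧ l₂.Nodup ∧
      x ∉ l₁ ∧ x ∉ l₂ ∧ x ∉ l₃ ∧ Cross l) := by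
  classical
  have hex : ∃ n, ∃ (x : S) (l₁ l₂ l₃ : List S),
      l = l₁ ++ x :: (l₂ ++ x :: l₃) ∧ l₂.length = n := by
    obtain ⟨z, t, rfl⟩ : ∃ z t, l = z :: t := by
      cases l with
      | nil => exact absurd rfl hne
      | cons z t => exact ⟨z, t, rfl⟩
    have hz : (z :: t).count z = 2 := hp z ((List.mem_cons_self (a := z) (l := t)))
    obtain ⟨m₁, m₂, m₃, hm⟩ := two_split (le_of_eq hz.symm)
    exact ⟨m₂.length, z, m₁, m₂, m₃, by rw [hm]; simp, rfl⟩
  obtain ⟨x, l₁, l₂, l₃, hdec, hlen₂⟩ := Nat.find_spec hex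
  have hxl : x ∈ l := by rw [hdec]; simp
  have hc2 := hp x hxl
  rw [hdec] at hc2
  simp only [List.count_append, List.count_cons_self, List.count_cons] at hc2
  have hx1 : x ∉ l₁ := List.count_eq_zero.mp (by omega)
  have hx2 : x ∉ l₂ := List.count_eq_zero.mp (by omega)
  have hx3 : x ∉ l₃ := List.count_eq_zero.mp (by omega)
  rcases Nat.eq_zero_or_pos (Nat.find hex) with h0 | hpos
  · left
    have hl2 : l₂ = [] := List.length_eq_zero_iff.mp (by omega)
    refine ⟨x, l₁, l₃, ?_, hx1, hx3⟩
    rw [hdec, hl2]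
    simp
  · right
    have hnd : l₂.Nodup := by
      by_contra hnd
      rw [List.nodup_iff_count_le_one] at hnd
      push_neg at hnd
      obtain ⟨y, hy⟩ := hnd
      obtain ⟨m₁, m₂, m₃, hm⟩ := two_split (by omega : 2 ≤ l₂.count y)
      have hlt : m₂.length < Nat.find hex := by
        have : l₂.length = m₁.length + m₂.length + m₃.length + 2 := by
          rw [hm]; simp; omega
        omega
      exact absurd
        ⟨y, l₁ ++ x :: m₁, m₂, m₃ ++ x :: l₃, by rw [hdec, hm]; simp, rfl⟩
        (Nat.find_min hex hlt)
    have hne₂ : l₂ ≠ [] := by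
      intro h
      rw [h] at hlen₂
      simp only [List.length_nil] at hlen₂
      omega
    obtain ⟨y, l₂', rfl⟩ : ∃ y l₂', l₂ = y :: l₂' := by
      cases l₂ with
      | nil => exact absurd rfl hne₂
      | cons y t => exact ⟨y, t, rfl⟩
    have hyx : y ≠ x := by
      intro h
      exact hx2 (by rw [h]; exact List.mem_cons_self)
    have hyl2' : y ∉ l₂' := (List.nodup_cons.mp hnd).1
    have hyl : y ∈ l := by rw [hdec]; simp
    have hcy := hp y hyl
    rw [hdec] at hcy
    simp only [List.count_append, List.count_cons_of_ne hyx.symm, List.count_cons_self,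
      List.count_cons] at hcy
    have hcy2' : l₂'.count y = 0 := List.count_eq_zero.mpr hyl2'
    have hcase : l₃.count y = 1 ∨ l₁.count y = 1 := by omega
    have hcr : Cross l := by
      rcases hcase with hc | hc
      · have hyl3 : y ∈ l₃ := List.count_pos_iff.mp (by omega)
        obtain ⟨m₁, m₂, hm3⟩ := List.append_of_mem hyl3
        have hleq : l = l₁ ++ x :: ([] ++ y :: (l₂' ++ x :: (m₁ ++ y :: m₂))) := by
          rw [hdec, hm3]; simp
        rw [hleq]
        exact cross_of_pattern l₁ [] l₂' m₁ m₂ hyx.symm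
      · have hyl1 : y ∈ l₁ := List.count_pos_iff.mp (by omega)
        obtain ⟨m₁, m₂, hm1⟩ := List.append_of_mem hyl1
        have hleq : l = m₁ ++ y :: (m₂ ++ x :: ([] ++ y :: (l₂' ++ x :: l₃))) := by
          rw [hdec, hm1]; simp
        rw [hleq]
        exact cross_of_pattern m₁ m₂ [] l₂' l₃ hyx
    exact ⟨x, l₁, y :: l₂', l₃, hdec, hne₂, hnd, hx1, hx2, hx3, hcr⟩

end Comb

section Main

variable {S : Type*} (M : CoxeterMatrix S)

theorem hard_aux [DecidableEq S] (hM : ∀ s t : S, s ≠ t → M s t = 0 ∨ 3 ≤ M s t) :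
    ∀ (N : ℕ) (l : List S), l.length ≤ N → Pair l → TT M l = 1 → ¬ Cross l := by
  intro N
  induction N with
  | zero =>
    intro l hl _ _ hcr
    obtain ⟨i, k, j, m, _, _, _, hm, _⟩ := hcr
    omega
  | succ N ih =>
    intro l hl hp hT hcr
    have hne : l ≠ [] := by
      rintro rfl
      obtain ⟨i, k, j, m, _, _, _, hm, _⟩ := hcr
      simp at hm
    rcases min_gap hp hne with ⟨x, l₁, l₃, hdec, hx1, hx3⟩ |
      ⟨x, l₁, l₂, l₃, hdec, hne₂, hnd, hx1, hx2, hx3, _⟩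
    · -- adjacent pair: delete and recurse
      have hT2 : TT M (l₁ ++ l₃) = 1 := by
        rw [hdec, TT_append, TT_cons, TT_cons, ← mul_assoc (sg M x), sg_mul_self, one_mul,
          ← TT_append] at hT
        exact hT
      have hlen : (l₁ ++ l₃).length ≤ N := by
        have : l.length = l₁.length + l₃.length + 2 := by rw [hdec]; simp; omega
        simp only [List.length_append]
        omega
      exact ih (l₁ ++ l₃) hlen (pair_del (hdec ▸ hp) hx1 hx3) hT2
        (cross_del hx1 hx3 (hdec ▸ hcr))
    · -- gap at least 2: contradiction
      have hT2 : TT M ((x :: (l₂ ++ x :: l₃)) ++ l₁) = 1 := by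
        apply TT_rotate
        rw [← hdec]
        exact hT
      have hre : (x :: (l₂ ++ x :: l₃)) ++ l₁ = x :: (l₂ ++ x :: (l₃ ++ l₁)) := by simp
      rw [hre] at hT2
      exact contra M hM hne₂ hnd hx2
        (by simp only [List.mem_append]; tauto) hT2

variable {W : Type*} [Group W] (cs : CoxeterSystem M W)

theorem easy_aux [DecidableEq S] :
    ∀ (N : ℕ) (l : List S), l.length ≤ N → Pair l → ¬ Cross l → cs.wordProd l = 1 := by
  intro N
  induction N with
  | zero =>
    intro l hl _ _
    have : l = [] := List.length_eq_zero_iff.mp (by omega)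
    rw [this, CoxeterSystem.wordProd_nil]
  | succ N ih =>
    intro l hl hp hcr
    by_cases hne : l = []
    · rw [hne, CoxeterSystem.wordProd_nil]
    rcases min_gap hp hne with ⟨x, l₁, l₃, hdec, hx1, hx3⟩ |
      ⟨_, _, _, _, _, _, _, _, _, _, hcross⟩
    · have hπ : cs.wordProd l = cs.wordProd (l₁ ++ l₃) := by
        rw [hdec, cs.wordProd_append, cs.wordProd_cons, cs.wordProd_cons,
          cs.simple_mul_simple_cancel_left, ← cs.wordProd_append]
      rw [hπ]
      have hlen : (l₁ ++ l₃).length ≤ N := by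
        have : l.length = l₁.length + l₃.length + 2 := by rw [hdec]; simp; omega
        simp only [List.length_append]
        omega
      exact ih (l₁ ++ l₃) hlen (pair_del (hdec ▸ hp) hx1 hx3)
        (fun hc => hcr (hdec ▸ cross_ins x hc))
    · exact absurd hcross hcr

end Main


end NCAux

open NCAux in
/-- Let `M` be a Coxeter matrix on `S` with `M s t ≥ 3` or `M s t = 0` (encoding `∞`) for all
`s ≠ t`, with associated Coxeter system `(W, cs)`.  If the word `(w₁, …, w_r)` defines a pair
partition `V` (every nonempty fiber of `i ↦ w i` has exactly two elements), then
`w₁ ⋯ w_r = 1` in `W` if and only if `V` is non-crossing. -/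
theorem wordProd_eq_one_iff_noncrossing {S : Type*}
    (M : CoxeterMatrix S) (hM : ∀ s t : S, s ≠ t → M s t = 0 ∨ 3 ≤ M s t)
    {W : Type*} [Group W] (cs : CoxeterSystem M W)
    {r : ℕ} (w : Fin r → S)
    (hpair : ∀ i, Nat.card {j : Fin r // w j = w i} = 2) :
    cs.wordProd (List.ofFn w) = 1 ↔
      ¬ ∃ i k j l : Fin r, i < k ∧ k < j ∧ j < l ∧
        w i = w j ∧ w k = w l ∧ w i ≠ w k := by
  classical
  set l : List S := List.ofFn w with hldef
  have hlen : l.length = r := List.length_ofFn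
  -- Pair property
  have hcnt : ∀ x : S, l.count x = Nat.card {j : Fin r // w j = x} := by
    intro x
    have h1 : l = (List.finRange r).map w := List.ofFn_eq_map
    rw [h1, ← Multiset.coe_count, ← Multiset.map_coe, Multiset.count_map]
    rw [Nat.card_eq_fintype_card, Fintype.card_subtype]
    have h2 : ((List.finRange r : List (Fin r)) : Multiset (Fin r))
        = (Finset.univ : Finset (Fin r)).val := rfl
    rw [h2]
    have h4 : Multiset.filter (fun a => x = w a) Finset.univ.val
        = Multiset.filter (fun j => w j = x) Finset.univ.val := by
      apply Multiset.filter_congr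
      intro a _
      constructor
      · exact fun h => h.symm
      · exact fun h => h.symm
    rw [h4]
    rfl
  have hpairl : Pair l := by
    intro x hx
    rw [hldef, List.mem_ofFn] at hx
    obtain ⟨i, rfl⟩ := hx
    rw [hcnt (w i), hpair i]
  -- crossing bridge
  have hcross : Cross l ↔ ∃ i k j m : Fin r, i < k ∧ k < j ∧ j < m ∧
      w i = w j ∧ w k = w m ∧ w i ≠ w k := by
    constructor
    · rintro ⟨i, k, j, m, h1, h2, h3, h4, h5, h6, h7⟩
      rw [hlen] at h4
      have hi : i < r := by omega
      have hk : k < r := by omega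
      have hj : j < r := by omega
      have hgi : l[i]? = some (w ⟨i, hi⟩) := by
        rw [hldef, List.getElem?_ofFn]
        simp [hi]
      have hgk : l[k]? = some (w ⟨k, hk⟩) := by
        rw [hldef, List.getElem?_ofFn]
        simp [hk]
      have hgj : l[j]? = some (w ⟨j, hj⟩) := by
        rw [hldef, List.getElem?_ofFn]
        simp [hj]
      have hgm : l[m]? = some (w ⟨m, h4⟩) := by
        rw [hldef, List.getElem?_ofFn]
        simp [h4]
      refine ⟨⟨i, hi⟩, ⟨k, hk⟩, ⟨j, hj⟩, ⟨m, h4⟩, h1, h2, h3, ?_, ?_, ?_⟩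
      · rw [hgi, hgj] at h5
        exact Option.some_injective _ h5
      · rw [hgk, hgm] at h6
        exact Option.some_injective _ h6
      · intro heq
        rw [hgi, hgk] at h7
        exact h7 (by rw [heq])
    · rintro ⟨i, k, j, m, h1, h2, h3, h5, h6, h7⟩
      have hgi : l[(i : ℕ)]? = some (w i) := by
        rw [hldef, List.getElem?_ofFn]
        simp [i.isLt]
      have hgk : l[(k : ℕ)]? = some (w k) := by
        rw [hldef, List.getElem?_ofFn]
        simp [k.isLt]
      have hgj : l[(j : ℕ)]? = some (w j) := by
        rw [hldef, List.getElem?_ofFn]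
        simp [j.isLt]
      have hgm : l[(m : ℕ)]? = some (w m) := by
        rw [hldef, List.getElem?_ofFn]
        simp [m.isLt]
      refine ⟨i, k, j, m, h1, h2, h3, by rw [hlen]; exact m.isLt, ?_, ?_, ?_⟩
      · rw [hgi, hgj, h5]
      · rw [hgk, hgm, h6]
      · rw [hgi, hgk]
        intro hcon
        exact h7 (Option.some_injective _ hcon)
  -- the lift
  set Φ : W →* Module.End ℝ (S →₀ ℝ) := cs.lift ⟨sg M, sg_liftable M hM⟩ with hΦdef
  have hΦT : Φ (cs.wordProd l) = TT M l := by
    rw [CoxeterSystem.wordProd, map_list_prod, List.map_map, TT]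
    congr 1
    apply List.map_congr_left
    intro x _
    exact cs.lift_apply_simple (sg_liftable M hM) x
  constructor
  · intro h1 hex
    have hT : TT M l = 1 := by
      rw [← hΦT, h1, map_one]
    exact hard_aux M hM l.length l le_rfl hpairl hT (hcross.mpr hex)
  · intro hnex
    exact easy_aux M cs l.length l le_rfl hpairl (fun hc => hnex (hcross.mp hc))
end
end

section
/- Let M be a Coxeter matrix on a type S with associated Coxeter system (W, cs). Let I ⊆ S, s ∈ S with s ∉ I, and let (t_1, …, t_n) be a reduced word with all t_i ∈ I. If the word (s, t_1, …, t_n, s) is not reduced (i.e., ℓ(cs.simple s · cs.simple t_1 · … · cs.simple t_n · cs.simple s) < n + 2), then M s t_r = 2 for every r ∈ {1, …, n}. -/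
open Real CoxeterSystem

namespace CoxAux

variable {S : Type*} (M : CoxeterMatrix S)

noncomputable section

def kf (x y : S) : ℝ := if M x y = 0 then -1 else -Real.cos (Real.pi / (M x y : ℝ))

lemma kf_symm (x y : S) : kf M x y = kf M y x := by
  unfold kf; rw [M.symmetric x y]

lemma kf_diag (x : S) : kf M x x = 1 := by
  simp [kf, M.diagonal x]

abbrev V (S : Type*) : Type _ := S →₀ ℝ

def ev (x : S) : V S := Finsupp.single x 1

def bf (x : S) : V S →ₗ[ℝ] ℝ := Finsupp.linearCombination ℝ (fun y => kf M x y)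

lemma bf_ev (x y : S) : bf M x (ev y) = kf M x y := by
  simp [bf, ev, Finsupp.linearCombination_single]

def sg (x : S) : Module.End ℝ (V S) :=
  LinearMap.id - LinearMap.smulRight (bf M x) ((2:ℝ) • ev x)

lemma sg_apply (x : S) (v : V S) : sg M x v = v - (2 * bf M x v) • ev x := by
  simp [sg, LinearMap.sub_apply, LinearMap.smulRight_apply, smul_smul, mul_comm]

lemma sg_ev (x y : S) : sg M x (ev y) = ev y - (2 * kf M x y) • ev x := by
  rw [sg_apply, bf_ev]

lemma sg_ev_self (x : S) : sg M x (ev x) = - ev x := by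
  rw [sg_ev, kf_diag]; module

lemma sg_fix (x : S) (v : V S) (h : bf M x v = 0) : sg M x v = v := by
  rw [sg_apply, h]; simp

lemma sg_sq (x : S) : sg M x * sg M x = 1 := by
  apply LinearMap.ext; intro v
  rw [Module.End.mul_apply, Module.End.one_apply]
  rw [sg_apply, sg_apply, map_sub, map_smul, bf_ev, kf_diag]
  simp only [smul_eq_mul]
  module

/- trig recursions -/
lemma sinrec (θ a : ℝ) : Real.sin (a + θ) = 2 * Real.cos θ * Real.sin a - Real.sin (a - θ) := by
  rw [Real.sin_add, Real.sin_sub]; ring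

lemma sinrec2 (θ a : ℝ) : Real.sin (a + 2*θ)
    = (4 * Real.cos θ ^ 2 - 1) * Real.sin a - 2 * Real.cos θ * Real.sin (a - θ) := by
  have h1 : a + 2*θ = (a + θ) + θ := by ring
  have h2 : a + θ - θ = a := by ring
  rw [h1, sinrec θ (a+θ), sinrec θ a, h2]
  ring

section pair

variable (i j : S)

lemma T_evi : (sg M i * sg M j) (ev i)
    = (4 * (kf M i j)^2 - 1) • ev i + (-(2 * kf M i j)) • ev j := by
  rw [Module.End.mul_apply, sg_ev, map_sub, map_smul, sg_ev, sg_ev, kf_diag, kf_symm M j i]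
  module

lemma T_evj : (sg M i * sg M j) (ev j)
    = (2 * kf M i j) • ev i + (-1 : ℝ) • ev j := by
  rw [Module.End.mul_apply, sg_ev, kf_diag, map_sub, map_smul, sg_ev]
  module

lemma T_pow_ev (hij : i ≠ j) (hm : 2 ≤ M i j) (k : ℕ) :
    Real.sin (π / (M i j : ℝ)) • ((sg M i * sg M j)^k) (ev i)
      = Real.sin ((2*(k:ℝ)+1) * (π / (M i j : ℝ))) • ev i
        + Real.sin ((2*(k:ℝ)) * (π / (M i j : ℝ))) • ev j
    ∧ Real.sin (π / (M i j : ℝ)) • ((sg M i * sg M j)^k) (ev j)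
      = (-Real.sin ((2*(k:ℝ)) * (π / (M i j : ℝ)))) • ev i
        + (-Real.sin ((2*(k:ℝ)-1) * (π / (M i j : ℝ)))) • ev j := by
  set θ := π / (M i j : ℝ) with hθ
  have hc : kf M i j = -Real.cos θ := by
    have : M i j ≠ 0 := by omega
    simp [kf, this, hθ]
  induction k with
  | zero =>
      constructor
      · have h1 : (2*((0:ℕ):ℝ)+1) * θ = θ := by push_cast; ring
        have h2 : (2*((0:ℕ):ℝ)) * θ = 0 := by push_cast; ring
        rw [h1, h2, Real.sin_zero]
        simp
      · have h1 : (2*((0:ℕ):ℝ)) * θ = 0 := by push_cast; ring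
        have h2 : (2*((0:ℕ):ℝ)-1) * θ = -θ := by push_cast; ring
        rw [h1, h2, Real.sin_zero, Real.sin_neg]
        simp
  | succ k ih =>
      obtain ⟨ih1, ih2⟩ := ih
      have hpow : ∀ v : V S, ((sg M i * sg M j)^(k+1)) v = ((sg M i * sg M j)^k) ((sg M i * sg M j) v) := by
        intro v; rw [pow_succ, Module.End.mul_apply]
      have hsw : ∀ (c1 c2 : ℝ) (X Y : V S), Real.sin θ • (c1 • X + c2 • Y)
          = c1 • (Real.sin θ • X) + c2 • (Real.sin θ • Y) := by
        intros c1 c2 X Y; module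
      constructor
      · rw [hpow, T_evi, map_add, map_smul, map_smul, hsw, ih1, ih2, hc]
        have e1 : (2*((k+1:ℕ):ℝ)+1) * θ = ((2*(k:ℝ)+1) * θ) + 2*θ := by push_cast; ring
        have e2 : (2*((k+1:ℕ):ℝ)) * θ = ((2*(k:ℝ)) * θ) + 2*θ := by push_cast; ring
        have e3 : (2*(k:ℝ)+1) * θ - θ = (2*(k:ℝ)) * θ := by ring
        have e4 : (2*(k:ℝ)) * θ - θ = (2*(k:ℝ)-1) * θ := by ring
        rw [e1, e2, sinrec2 θ ((2*(k:ℝ)+1) * θ), sinrec2 θ ((2*(k:ℝ)) * θ), e3, e4]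
        module
      · rw [hpow, T_evj, map_add, map_smul, map_smul, hsw, ih1, ih2, hc]
        have e1 : (2*((k+1:ℕ):ℝ)) * θ = ((2*(k:ℝ)+1) * θ) + θ := by push_cast; ring
        have e2 : (2*((k+1:ℕ):ℝ)-1) * θ = ((2*(k:ℝ)) * θ) + θ := by push_cast; ring
        have e3 : (2*(k:ℝ)+1) * θ - θ = (2*(k:ℝ)) * θ := by ring
        have e4 : (2*(k:ℝ)) * θ - θ = (2*(k:ℝ)-1) * θ := by ring
        rw [e1, e2, sinrec θ ((2*(k:ℝ)+1) * θ), sinrec θ ((2*(k:ℝ)) * θ), e3, e4]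
        module

lemma kf_zero_two {x y : S} (hxy : x ≠ y) (h : kf M x y = 0) : M x y = 2 := by
  unfold kf at h
  by_cases h0 : M x y = 0
  · rw [if_pos h0] at h; norm_num at h
  · rw [if_neg h0] at h
    have h1 : M x y ≠ 1 := M.off_diagonal x y hxy
    by_contra hne
    have h3 : 3 ≤ M x y := by omega
    have hc : Real.cos (π / (M x y : ℝ)) > 0 := by
      apply Real.cos_pos_of_mem_Ioo
      constructor
      · have : (0:ℝ) < π / (M x y : ℝ) := by
          apply div_pos Real.pi_pos
          exact_mod_cast Nat.pos_of_ne_zero h0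
        linarith [Real.pi_pos]
      · rw [div_lt_div_iff₀ (by exact_mod_cast Nat.pos_of_ne_zero h0) (by norm_num : (0:ℝ) < 2)]
        have : (3:ℝ) ≤ (M x y : ℝ) := by exact_mod_cast h3
        nlinarith [Real.pi_pos]
    simp only [neg_eq_zero] at h
    linarith

lemma sg_pair_pow (i j : S) : (sg M i * sg M j) ^ (M i j) = 1 := by
  rcases eq_or_ne i j with rfl | hij
  · rw [M.diagonal i, pow_one, sg_sq]
  rcases Nat.lt_or_ge (M i j) 2 with hlt | hm
  · interval_cases h : M.M i j
    · rw [pow_zero]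
    · exact absurd h (M.off_diagonal i j hij)
  -- main case
  set θ := π / (M i j : ℝ) with hθ
  have hm0 : M i j ≠ 0 := by omega
  have hmr : (2:ℝ) ≤ (M i j : ℝ) := by exact_mod_cast hm
  have hmpos : (0:ℝ) < (M i j : ℝ) := by linarith
  have hθpos : 0 < θ := div_pos Real.pi_pos hmpos
  have hθlt : θ < π := by
    rw [hθ, div_lt_iff₀ hmpos]
    nlinarith [Real.pi_pos]
  have hsθ : Real.sin θ ≠ 0 := ne_of_gt (Real.sin_pos_of_pos_of_lt_pi hθpos hθlt)
  have h2m : (2*((M i j : ℕ):ℝ)) * θ = 2*π := by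
    rw [hθ]; field_simp
  set T := sg M i * sg M j with hT
  obtain ⟨key1, key2⟩ := T_pow_ev M i j hij hm (M i j)
  have e1 : (2*((M i j : ℕ):ℝ)+1) * θ = θ + 2*π := by rw [← h2m]; ring
  have e2 : (2*((M i j : ℕ):ℝ)) * θ = 2*π := h2m
  have e3 : (2*((M i j : ℕ):ℝ)-1) * θ = -θ + 2*π := by rw [← h2m]; ring
  rw [e1, e2, Real.sin_add_two_pi, Real.sin_two_pi] at key1
  rw [e2, e3, Real.sin_add_two_pi, Real.sin_two_pi, Real.sin_neg] at key2
  have hTi : (T ^ (M i j)) (ev i) = ev i := by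
    have := key1
    rw [zero_smul, add_zero] at this
    exact smul_right_injective (V S) hsθ this
  have hTj : (T ^ (M i j)) (ev j) = ev j := by
    have := key2
    rw [neg_zero, zero_smul, zero_add, neg_neg] at this
    exact smul_right_injective (V S) hsθ this
  -- decompose arbitrary vectors
  apply LinearMap.ext; intro v
  set c := kf M i j with hcdef
  have hc : c = -Real.cos θ := by simp [hcdef, kf, hm0, hθ]
  have hc2 : 1 - c^2 ≠ 0 := by
    have hpyth := Real.sin_sq_add_cos_sq θ
    have : 1 - c^2 = Real.sin θ^2 := by rw [hc]; nlinarith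
    rw [this]
    exact pow_ne_zero 2 hsθ
  set a := (bf M i v - c * bf M j v)/(1 - c^2) with ha
  set b := (bf M j v - c * bf M i v)/(1 - c^2) with hb
  set v' := v - a • ev i - b • ev j with hv'
  have hbfi : bf M i v' = 0 := by
    rw [hv', map_sub, map_sub, map_smul, map_smul, bf_ev, bf_ev, kf_diag, ← hcdef, ha, hb]
    field_simp
    linear_combination (-(bf M i v)) * mul_inv_cancel₀ hc2
  have hbfj : bf M j v' = 0 := by
    rw [hv', map_sub, map_sub, map_smul, map_smul, bf_ev, bf_ev, kf_diag, kf_symm M j i, ← hcdef,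
      ha, hb]
    field_simp
    linear_combination (-(bf M j v)) * mul_inv_cancel₀ hc2
  have hfix : ∀ k : ℕ, (T ^ k) v' = v' := by
    intro k
    induction k with
    | zero => rw [pow_zero]; rfl
    | succ k ih =>
        rw [pow_succ, Module.End.mul_apply, hT, Module.End.mul_apply,
          sg_fix M j v' hbfj, sg_fix M i v' hbfi, ← hT, ih]
  have hdecomp : v = v' + a • ev i + b • ev j := by rw [hv']; module
  calc (T ^ (M i j)) v = (T ^ (M i j)) v' + a • (T ^ (M i j)) (ev i) + b • (T ^ (M i j)) (ev j) := by
        rw [hdecomp, map_add, map_add, map_smul, map_smul]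
    _ = v' + a • ev i + b • ev j := by rw [hfix, hTi, hTj]
    _ = v := hdecomp.symm
    _ = (1 : Module.End ℝ (V S)) v := rfl

lemma sg_liftable : M.IsLiftable (sg M) := fun i j => sg_pair_pow M i j

end pair

section csys

variable {W : Type*} [Group W] (cs : CoxeterSystem M W)

def phiG : W →* Module.End ℝ (V S) := cs.lift ⟨sg M, sg_liftable M⟩

lemma phiG_simple (x : S) : phiG M cs (cs.simple x) = sg M x :=
  cs.lift_apply_simple (sg_liftable M) x

lemma simple_injective_s6 {x y : S} (h : cs.simple x = cs.simple y) : x = y := by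
  by_contra hxy
  have h2 : sg M x = sg M y := by
    rw [← phiG_simple M cs x, ← phiG_simple M cs y, h]
  have h3 : sg M x (ev x) = sg M y (ev x) := by rw [h2]
  rw [sg_ev_self, sg_ev] at h3
  have h4 := DFunLike.congr_fun h3 x
  simp only [ev, Finsupp.coe_neg, Pi.neg_apply, Finsupp.single_eq_same, Finsupp.coe_sub,
    Pi.sub_apply, Finsupp.coe_smul, Pi.smul_apply, smul_eq_mul] at h4
  rw [Finsupp.single_eq_of_ne' (Ne.symm hxy)] at h4
  norm_num at h4

lemma M_eq_two_of_conj {s t x : S} (hst : s ≠ t)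
    (h : cs.simple s * cs.simple t * cs.simple s = cs.simple x) : M s t = 2 := by
  have h2 : sg M s * sg M t * sg M s = sg M x := by
    have := congrArg (phiG M cs) h
    rwa [map_mul, map_mul, phiG_simple, phiG_simple, phiG_simple] at this
  have h3 : (sg M s * sg M t * sg M s) (ev s) = sg M x (ev s) := by rw [h2]
  rw [Module.End.mul_apply, Module.End.mul_apply, sg_ev_self, map_neg, sg_ev, sg_ev] at h3
  -- LHS = -(ev s - 2 kf t s • ev t) mapped by sg s...
  rw [neg_sub, map_sub, map_smul, sg_ev, sg_ev_self, kf_symm M t s] at h3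
  have h4 := DFunLike.congr_fun h3 t
  have hts : t ≠ s := Ne.symm hst
  apply kf_zero_two M hst
  by_cases hxt : x = t
  · subst hxt
    rw [kf_symm M x s] at h4
    simp [ev, Finsupp.single_apply, hst, hts] at h4
    linarith
  · simp [ev, Finsupp.single_apply, hst, hts, hxt] at h4
    linarith

end csys

end

/-! ### Part A : the `ZMod 2` reflection cocycle -/

section partA

open scoped Classical

variable {S : Type*} {M : CoxeterMatrix S} {W : Type*} [Group W] (cs : CoxeterSystem M W)

noncomputable def gN (i : S) : Function.End (W → ZMod 2) :=
  fun F t => F (cs.simple i * t * cs.simple i) + (if t = cs.simple i then 1 else 0)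

lemma simple_rho_pow (i j : S) (k : ℕ) :
    cs.simple i * ((cs.simple i * cs.simple j) ^ k)⁻¹
      = (cs.simple i * cs.simple j) ^ k * cs.simple i := by
  induction k with
  | zero => simp
  | succ k ih =>
      have h1 : cs.simple i * (cs.simple i * cs.simple j)⁻¹
          = (cs.simple i * cs.simple j) * cs.simple i := by
        rw [mul_inv_rev, cs.inv_simple, cs.inv_simple, ← mul_assoc]
      rw [pow_succ, mul_inv_rev, ← mul_assoc, h1, mul_assoc, ih, ← mul_assoc, ← pow_succ']
      rw [pow_succ]


lemma gN_pow_formula (i j : S) (k : ℕ) : ∀ (F : W → ZMod 2) (t : W),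
    ((gN cs i * gN cs j) ^ k) F t
      = F (((cs.simple i * cs.simple j) ^ k)⁻¹ * t * (cs.simple i * cs.simple j) ^ k)
        + ∑ r ∈ Finset.range (2*k),
            (if t = (cs.simple i * cs.simple j) ^ r * cs.simple i then 1 else 0) := by
  induction k with
  | zero =>
      intro F t
      simp only [pow_zero, Nat.mul_zero, Finset.range_zero, Finset.sum_empty, inv_one,
        one_mul, mul_one, add_zero]
      rfl
  | succ k ih =>
      intro F t
      obtain ⟨ρ, hρ⟩ : ∃ ρ, ρ = cs.simple i * cs.simple j := ⟨_, rfl⟩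
      simp only [← hρ] at ih ⊢
      obtain ⟨P, hP⟩ : ∃ P, P = ρ ^ k := ⟨_, rfl⟩
      have hii : cs.simple i * cs.simple i = 1 := cs.simple_mul_simple_self i
      have hP1 : cs.simple i * P⁻¹ = P * cs.simple i := by
        rw [hP, hρ]; exact simple_rho_pow cs i j k
      have hPP : P * P = ρ ^ (2*k) := by rw [hP, two_mul, pow_add]
      have hPs : ρ ^ (k+1) = P * ρ := by rw [hP, pow_succ]
      have hmul : ((gN cs i * gN cs j) ^ (k+1)) F t
          = ((gN cs i * gN cs j) ^ k) ((gN cs i * gN cs j) F) t := by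
        rw [pow_succ]; rfl
      rw [hmul, ih ((gN cs i * gN cs j) F) t]
      simp only [← hP]
      have hAF : ∀ u : W, (gN cs i * gN cs j) F u
          = F (ρ⁻¹ * u * ρ)
            + ((if u = cs.simple i then 1 else 0)
              + (if cs.simple i * u * cs.simple i = cs.simple j then 1 else 0)) := by
        intro u
        show gN cs i (gN cs j F) u = _
        unfold gN
        have harg : cs.simple j * (cs.simple i * u * cs.simple i) * cs.simple j
            = ρ⁻¹ * u * ρ := by
          rw [hρ, mul_inv_rev, cs.inv_simple, cs.inv_simple]
          group
        rw [harg]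
        ring
      rw [hAF]
      have habs2 : ∀ (u x : W), (P⁻¹ * u * P = x) ↔ (u = P * x * P⁻¹) := by
        intro u x
        constructor
        · intro h; rw [← h]; group
        · intro h; rw [h]; group
      have e1 : ρ⁻¹ * (P⁻¹ * t * P) * ρ = (P * ρ)⁻¹ * t * (P * ρ) := by group
      have hval2 : P * cs.simple i * P⁻¹ = ρ^(2*k) * cs.simple i := by
        rw [mul_assoc, hP1, ← mul_assoc, hPP]
      have e2 : (P⁻¹ * t * P = cs.simple i) ↔ (t = ρ^(2*k) * cs.simple i) := by
        rw [habs2, hval2]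
      have h3a : ∀ u : W, (cs.simple i * u * cs.simple i = cs.simple j)
          ↔ (u = cs.simple i * cs.simple j * cs.simple i) := by
        intro u
        constructor
        · intro h
          rw [← h, show cs.simple i * (cs.simple i * u * cs.simple i) * cs.simple i
              = (cs.simple i * cs.simple i) * u * (cs.simple i * cs.simple i) by group,
            hii, one_mul, mul_one]
        · intro h
          rw [h, show cs.simple i * (cs.simple i * cs.simple j * cs.simple i) * cs.simple i
              = (cs.simple i * cs.simple i) * cs.simple j * (cs.simple i * cs.simple i) by group,
            hii, one_mul, mul_one]
      have hPrP : P * ρ * P = ρ^(2*k+1) := by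
        rw [hP, ← pow_succ, ← pow_add, show k+1+k = 2*k+1 by ring]
      have hval3 : P * (cs.simple i * cs.simple j * cs.simple i) * P⁻¹
          = ρ^(2*k+1) * cs.simple i := by
        rw [show P * (cs.simple i * cs.simple j * cs.simple i) * P⁻¹
            = (P * (cs.simple i * cs.simple j)) * (cs.simple i * P⁻¹) by group, hP1, ← hρ,
          show P * ρ * (P * cs.simple i) = (P * ρ * P) * cs.simple i by group, hPrP]
      have e3 : (cs.simple i * (P⁻¹ * t * P) * cs.simple i = cs.simple j)
          ↔ (t = ρ^(2*k+1) * cs.simple i) := by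
        rw [h3a, habs2, hval3]
      rw [e1, ← hPs]
      rw [show (if P⁻¹ * t * P = cs.simple i then (1:ZMod 2) else 0)
            = (if t = ρ^(2*k) * cs.simple i then 1 else 0) by simp only [e2]]
      rw [show (if cs.simple i * (P⁻¹ * t * P) * cs.simple i = cs.simple j then (1:ZMod 2) else 0)
            = (if t = ρ^(2*k+1) * cs.simple i then 1 else 0) by simp only [e3]]
      rw [show 2*(k+1) = (2*k) + 1 + 1 by ring, Finset.sum_range_succ, Finset.sum_range_succ]
      ring

lemma gN_liftable : M.IsLiftable (gN cs) := by
  intro i j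
  funext F t
  rw [gN_pow_formula cs i j (M i j) F t]
  rw [cs.simple_mul_simple_pow i j]
  have hsum : ∑ r ∈ Finset.range (2 * M i j),
      (if t = (cs.simple i * cs.simple j) ^ r * cs.simple i then (1:ZMod 2) else 0) = 0 := by
    have hper : ∀ r : ℕ,
        (if t = (cs.simple i * cs.simple j) ^ (M i j + r) * cs.simple i then (1:ZMod 2) else 0)
        = (if t = (cs.simple i * cs.simple j) ^ r * cs.simple i then 1 else 0) := by
      intro r
      rw [add_comm, pow_add, cs.simple_mul_simple_pow i j, mul_one]
    have h2m : 2 * M i j = M i j + M i j := by ring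
    rw [h2m, Finset.range_eq_Ico,
      ← Finset.sum_Ico_consecutive _ (Nat.zero_le (M i j)) (Nat.le_add_left (M i j) (M i j))]
    have hsecond : (∑ r ∈ Finset.Ico (M i j) (M i j + M i j),
        (if t = (cs.simple i * cs.simple j) ^ r * cs.simple i then (1:ZMod 2) else 0))
        = ∑ r ∈ Finset.Ico 0 (M i j),
          (if t = (cs.simple i * cs.simple j) ^ r * cs.simple i then (1:ZMod 2) else 0) := by
      rw [Finset.sum_Ico_eq_sum_range]
      rw [show M i j + M i j - M i j = M i j from by omega]
      rw [← Finset.range_eq_Ico]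
      exact Finset.sum_congr rfl (fun r _ => hper r)
    rw [hsecond, ← Finset.sum_add_distrib]
    apply Finset.sum_eq_zero
    intro r _
    exact CharTwo.add_self_eq_zero _
  rw [hsum]
  simp only [inv_one, one_mul, mul_one, add_zero]
  rfl

noncomputable def phiN : W →* Function.End (W → ZMod 2) := cs.lift ⟨gN cs, gN_liftable cs⟩

lemma phiN_simple (i : S) : phiN cs (cs.simple i) = gN cs i :=
  cs.lift_apply_simple (gN_liftable cs) i

noncomputable def Nf (w : W) : W → ZMod 2 := phiN cs w (0 : W → ZMod 2)

lemma phiN_apply (w : W) : ∀ (F : W → ZMod 2) (t : W),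
    phiN cs w F t = F (w⁻¹ * t * w) + Nf cs w t := by
  induction w using cs.simple_induction_left with
  | one =>
      intro F t
      simp only [map_one, Nf]
      show F t = F (1⁻¹ * t * 1) + (0 : W → ZMod 2) t
      simp
  | mul_simple_left w i ih =>
      intro F t
      have key : ∀ G : W → ZMod 2,
          phiN cs (cs.simple i * w) G t
            = G (w⁻¹ * (cs.simple i * t * cs.simple i) * w)
              + (Nf cs w (cs.simple i * t * cs.simple i)
                + (if t = cs.simple i then 1 else 0)) := by
        intro G
        rw [map_mul, phiN_simple]
        show gN cs i (phiN cs w G) t = _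
        unfold gN
        rw [ih G (cs.simple i * t * cs.simple i)]
        ring
      rw [key F]
      have hN : Nf cs (cs.simple i * w) t
          = Nf cs w (cs.simple i * t * cs.simple i) + (if t = cs.simple i then 1 else 0) := by
        have h0 := key 0
        unfold Nf
        rw [h0]
        simp only [Pi.zero_apply, zero_add]
        rfl
      rw [hN]
      have harg : (cs.simple i * w)⁻¹ * t * (cs.simple i * w)
          = w⁻¹ * (cs.simple i * t * cs.simple i) * w := by
        rw [mul_inv_rev, cs.inv_simple]; group
      rw [harg]

lemma Nf_mul (w w' : W) (t : W) :
    Nf cs (w * w') t = Nf cs w' (w⁻¹ * t * w) + Nf cs w t := by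
  unfold Nf
  rw [map_mul]
  show phiN cs w (phiN cs w' 0) t = _
  rw [phiN_apply cs w (phiN cs w' 0) t]
  rfl

lemma Nf_simple (i : S) (t : W) :
    Nf cs (cs.simple i) t = if t = cs.simple i then 1 else 0 := by
  unfold Nf
  rw [phiN_simple]
  show (0 : W → ZMod 2) (cs.simple i * t * cs.simple i) + _ = _
  simp only [Pi.zero_apply, zero_add]

lemma Nf_one (t : W) : Nf cs 1 t = 0 := by
  unfold Nf; rw [map_one]; rfl

lemma Nf_inv (w t : W) : Nf cs w⁻¹ (w⁻¹ * t * w) = Nf cs w t := by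
  have h := Nf_mul cs w w⁻¹ t
  rw [mul_inv_cancel, Nf_one] at h
  have hA : Nf cs w⁻¹ (w⁻¹ * t * w) + Nf cs w t = 0 := h.symm
  calc Nf cs w⁻¹ (w⁻¹ * t * w)
      = Nf cs w⁻¹ (w⁻¹ * t * w) + Nf cs w t + Nf cs w t := by
        rw [add_assoc, CharTwo.add_self_eq_zero, add_zero]
    _ = 0 + Nf cs w t := by rw [hA]
    _ = Nf cs w t := zero_add _

lemma Nf_refl_self {t : W} (ht : cs.IsReflection t) : Nf cs t t = 1 := by
  obtain ⟨v, i, rfl⟩ := ht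
  have e : v * cs.simple i * v⁻¹ = v * (cs.simple i * v⁻¹) := by group
  rw [e, Nf_mul cs v (cs.simple i * v⁻¹) (v * (cs.simple i * v⁻¹))]
  have h2 : v⁻¹ * (v * (cs.simple i * v⁻¹)) * v = cs.simple i := by group
  rw [h2, Nf_mul cs (cs.simple i) v⁻¹ (cs.simple i)]
  have h3 : (cs.simple i)⁻¹ * cs.simple i * cs.simple i = cs.simple i := by
    rw [inv_mul_cancel, one_mul]
  rw [h3, Nf_simple, if_pos rfl]
  have h4 : Nf cs v (v * (cs.simple i * v⁻¹)) = Nf cs v⁻¹ (cs.simple i) := by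
    have h5 := Nf_inv cs v⁻¹ (cs.simple i)
    rw [inv_inv] at h5
    rw [show v * cs.simple i * v⁻¹ = v * (cs.simple i * v⁻¹) by group] at h5
    exact h5
  rw [h4]
  have : ∀ a : ZMod 2, a + 1 + a = 1 := by decide
  exact this _

lemma lis_cons (i : S) (ω : List S) :
    cs.leftInvSeq (i :: ω)
      = cs.simple i :: (cs.leftInvSeq ω).map (MulAut.conj (cs.simple i)) := rfl

lemma mem_leftInvSeq_of_Nf_one (ω : List S) (t : W)
    (h : Nf cs (cs.wordProd ω) t = 1) : t ∈ cs.leftInvSeq ω := by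
  induction ω generalizing t with
  | nil =>
      rw [cs.wordProd_nil] at h
      rw [Nf_one] at h
      exact absurd h (by decide)
  | cons i ω ih =>
      rw [cs.wordProd_cons, Nf_mul cs (cs.simple i) (cs.wordProd ω) t, cs.inv_simple,
        Nf_simple] at h
      by_cases hti : t = cs.simple i
      · rw [lis_cons]
        rw [hti]
        exact List.mem_cons_self
      · rw [if_neg hti, add_zero] at h
        have hmem := ih (cs.simple i * t * cs.simple i) h
        rw [lis_cons]
        apply List.mem_cons_of_mem
        apply List.mem_map.mpr
        refine ⟨cs.simple i * t * cs.simple i, hmem, ?_⟩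
        show cs.simple i * (cs.simple i * t * cs.simple i) * (cs.simple i)⁻¹ = t
        rw [cs.inv_simple, ← mul_assoc, ← mul_assoc, cs.simple_mul_simple_self, one_mul,
          mul_assoc, cs.simple_mul_simple_self, mul_one]

lemma Nf_eq_one_of_left_descent {w t : W} (ht : cs.IsReflection t)
    (hlt : cs.length (t * w) < cs.length w) : Nf cs w t = 1 := by
  have hcases : ∀ a : ZMod 2, a = 0 ∨ a = 1 := by decide
  rcases hcases (Nf cs w t) with h0 | h1
  · exfalso
    have htw : Nf cs (t * w) t = 1 := by
      rw [Nf_mul cs t w t]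
      have harg : t⁻¹ * t * t = t := by rw [inv_mul_cancel, one_mul]
      rw [harg, h0, Nf_refl_self cs ht, zero_add]
    obtain ⟨ω, hωred, hωeq⟩ := cs.exists_reduced_word' (t * w)
    have hmem : t ∈ cs.leftInvSeq ω := by
      apply mem_leftInvSeq_of_Nf_one
      rw [← hωeq]
      exact htw
    have hinv := cs.isLeftInversion_of_mem_leftInvSeq hωred hmem
    rw [← hωeq] at hinv
    have hlt2 := hinv.2
    rw [← mul_assoc, CoxeterSystem.IsReflection.mul_self ht, one_mul] at hlt2
    omega
  · exact h1

lemma exchange_left {ω : List S} {t : W} (ht : cs.IsReflection t)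
    (hlt : cs.length (t * cs.wordProd ω) < cs.length (cs.wordProd ω)) :
    ∃ j, j < ω.length ∧ t * cs.wordProd ω = cs.wordProd (ω.eraseIdx j)
      ∧ (cs.leftInvSeq ω).getD j 1 = t := by
  have h1 := Nf_eq_one_of_left_descent cs ht hlt
  have hmem := mem_leftInvSeq_of_Nf_one cs ω t h1
  obtain ⟨j, hj, hjt⟩ := List.mem_iff_getElem.mp hmem
  rw [cs.length_leftInvSeq] at hj
  have hgetD : (cs.leftInvSeq ω).getD j 1 = t := by
    rw [List.getD_eq_getElem _ _ (by rw [cs.length_leftInvSeq]; exact hj)]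
    exact hjt
  refine ⟨j, hj, ?_, hgetD⟩
  have := cs.getD_leftInvSeq_mul_wordProd ω j
  rw [hgetD] at this
  exact this

lemma lis_getD_form (ω : List S) (j : ℕ) (hj : j < ω.length) :
    (cs.leftInvSeq ω).getD j 1
      = cs.wordProd ((ω.take j) ++ [ω[j]] ++ (ω.take j).reverse) := by
  rw [cs.getD_leftInvSeq]
  rw [List.getElem?_eq_getElem hj]
  simp only [Option.map_some, Option.getD_some]
  rw [cs.wordProd_append, cs.wordProd_append, cs.wordProd_singleton, cs.wordProd_reverse]

lemma lis_mem_word {ω : List S} {t : W} (h : t ∈ cs.leftInvSeq ω) :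
    ∃ σ : List S, (∀ y ∈ σ, y ∈ ω) ∧ cs.wordProd σ = t := by
  obtain ⟨j, hj, hjt⟩ := List.mem_iff_getElem.mp h
  rw [cs.length_leftInvSeq] at hj
  refine ⟨(ω.take j) ++ [ω[j]] ++ (ω.take j).reverse, ?_, ?_⟩
  · intro y hy
    simp only [List.mem_append, List.mem_singleton, List.mem_reverse] at hy
    rcases hy with (hy | rfl) | hy
    · exact (List.take_sublist j ω).subset hy
    · exact List.getElem_mem hj
    · exact (List.take_sublist j ω).subset hy
  · rw [← lis_getD_form cs ω j hj]
    rw [List.getD_eq_getElem _ _ (by rw [cs.length_leftInvSeq]; exact hj)]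
    exact hjt

lemma exchange_right {ω : List S} {x : S}
    (hlt : cs.length (cs.wordProd ω * cs.simple x) < cs.length (cs.wordProd ω)) :
    ∃ σ : List S, σ.length + 1 = ω.length ∧ (∀ y ∈ σ, y ∈ ω)
      ∧ cs.wordProd σ = cs.wordProd ω * cs.simple x := by
  have h1 : cs.length (cs.simple x * cs.wordProd ω.reverse)
      < cs.length (cs.wordProd ω.reverse) := by
    rw [cs.wordProd_reverse]
    rw [show cs.simple x * (cs.wordProd ω)⁻¹ = (cs.wordProd ω * cs.simple x)⁻¹ by
      rw [mul_inv_rev, cs.inv_simple]]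
    rw [cs.length_inv, cs.length_inv]
    exact hlt
  obtain ⟨j, hj, heq, -⟩ := exchange_left cs (cs.isReflection_simple x) h1
  rw [List.length_reverse] at hj
  refine ⟨(ω.reverse.eraseIdx j).reverse, ?_, ?_, ?_⟩
  · rw [List.length_reverse, List.length_eraseIdx, if_pos (by rw [List.length_reverse]; exact hj),
      List.length_reverse]
    omega
  · intro y hy
    rw [List.mem_reverse] at hy
    have := (List.eraseIdx_sublist ω.reverse j).subset hy
    rwa [List.mem_reverse] at this
  · have := congrArg (fun z : W => z⁻¹) heq
    rw [cs.wordProd_reverse, mul_inv_rev, inv_inv, cs.inv_simple] at this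
    rw [cs.wordProd_reverse]
    rw [this]

lemma deletion {ω : List S} (h : ¬ cs.IsReduced ω) :
    ∃ σ : List S, σ.length + 2 = ω.length ∧ (∀ y ∈ σ, y ∈ ω)
      ∧ cs.wordProd σ = cs.wordProd ω := by
  induction ω using List.reverseRecOn with
  | nil =>
      exfalso
      apply h
      show cs.length (cs.wordProd []) = _
      rw [cs.wordProd_nil, cs.length_one]
      rfl
  | append_singleton ω x ih =>
      by_cases hred : cs.IsReduced ω
      · have hlen : cs.length (cs.wordProd (ω ++ [x])) ≠ (ω ++ [x]).length := h
        rw [cs.wordProd_append, cs.wordProd_singleton] at hlen ⊢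
        rcases cs.length_mul_simple (cs.wordProd ω) x with hup | hdown
        · exfalso
          apply hlen
          rw [hup, hred, List.length_append, List.length_singleton]
        · have hlt : cs.length (cs.wordProd ω * cs.simple x) < cs.length (cs.wordProd ω) := by
            omega
          obtain ⟨σ, h1, h2, h3⟩ := exchange_right cs hlt
          refine ⟨σ, ?_, ?_, h3⟩
          · rw [List.length_append, List.length_singleton]
            omega
          · intro y hy
            exact List.mem_append_left [x] (h2 y hy)
      · obtain ⟨σ, h1, h2, h3⟩ := ih hred
        refine ⟨σ ++ [x], ?_, ?_, ?_⟩
        · rw [List.length_append, List.length_append, List.length_singleton]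
          omega
        · intro y hy
          rcases List.mem_append.mp hy with hy | hy
          · exact List.mem_append_left [x] (h2 y hy)
          · exact List.mem_append_right ω hy
        · rw [cs.wordProd_append, cs.wordProd_append, h3]

lemma exists_reduced_sub (ω : List S) :
    ∃ σ : List S, cs.IsReduced σ ∧ (∀ y ∈ σ, y ∈ ω) ∧ cs.wordProd σ = cs.wordProd ω := by
  generalize hn : ω.length = n
  induction n using Nat.strong_induction_on generalizing ω with
  | _ n ih =>
      by_cases hred : cs.IsReduced ω
      · exact ⟨ω, hred, fun y hy => hy, rfl⟩
      · obtain ⟨σ, h1, h2, h3⟩ := deletion cs hred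
        obtain ⟨σ', r1, r2, r3⟩ := ih σ.length (by omega) σ rfl
        exact ⟨σ', r1, fun y hy => h2 y (r2 y hy), by rw [r3, h3]⟩

lemma simple_notin_parabolic {I : Set S} {s : S} (hs : s ∉ I) {σ : List S}
    (hσ : ∀ x ∈ σ, x ∈ I) : cs.wordProd σ ≠ cs.simple s := by
  intro heq
  obtain ⟨σ', r1, r2, r3⟩ := exists_reduced_sub cs σ
  rw [heq] at r3
  have hlen : σ'.length = 1 := by
    have h1 : cs.length (cs.wordProd σ') = σ'.length := r1
    rw [r3, cs.length_simple] at h1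
    omega
  obtain ⟨y, rfl⟩ := List.length_eq_one_iff.mp hlen
  rw [cs.wordProd_singleton] at r3
  have : y = s := simple_injective_s6 M cs r3
  subst this
  exact hs (hσ y (r2 y (List.mem_singleton_self y)))

lemma length_simple_mul_parabolic {I : Set S} {s : S} (hs : s ∉ I) {σ : List S}
    (hσ : ∀ x ∈ σ, x ∈ I) :
    cs.length (cs.simple s * cs.wordProd σ) = cs.length (cs.wordProd σ) + 1 := by
  rcases cs.length_simple_mul (cs.wordProd σ) s with h | h
  · exact h
  · exfalso
    have hlt : cs.length (cs.simple s * cs.wordProd σ) < cs.length (cs.wordProd σ) := by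
      have := cs.length_simple_mul_ne (cs.wordProd σ) s
      omega
    have h1 := Nf_eq_one_of_left_descent cs (cs.isReflection_simple s) hlt
    have hmem := mem_leftInvSeq_of_Nf_one cs σ _ h1
    obtain ⟨τ, hτ, heqτ⟩ := lis_mem_word cs hmem
    exact simple_notin_parabolic cs hs (fun y hy => hσ y (hτ y hy)) heqτ

lemma length_mul_simple_parabolic {I : Set S} {s : S} (hs : s ∉ I) {σ : List S}
    (hσ : ∀ x ∈ σ, x ∈ I) :
    cs.length (cs.wordProd σ * cs.simple s) = cs.length (cs.wordProd σ) + 1 := by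
  have h := length_simple_mul_parabolic cs hs (σ := σ.reverse)
    (fun x hx => hσ x (List.mem_reverse.mp hx))
  rw [cs.wordProd_reverse] at h
  rw [show cs.simple s * (cs.wordProd σ)⁻¹ = (cs.wordProd σ * cs.simple s)⁻¹ by
    rw [mul_inv_rev, cs.inv_simple]] at h
  rw [cs.length_inv, cs.length_inv] at h
  exact h

end partA

section partC

open scoped Classical

variable {S : Type*} {M : CoxeterMatrix S} {W : Type*} [Group W] (cs : CoxeterSystem M W)

lemma commute_letters {I : Set S} {s : S} (hs : s ∉ I) :
    ∀ l : List S, (∀ x ∈ l, x ∈ I) → cs.IsReduced l →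
      cs.simple s * cs.wordProd l = cs.wordProd l * cs.simple s →
      ∀ x ∈ l, M s x = 2 := by
  intro l
  induction l with
  | nil => intro _ _ _ x hx; exact absurd hx List.not_mem_nil
  | cons t l' ih =>
      intro hlI hred hcomm x hx
      -- basic data
      have hl'I : ∀ y ∈ l', y ∈ I := fun y hy => hlI y (List.mem_cons_of_mem t hy)
      have htI : t ∈ I := hlI t List.mem_cons_self
      have hl'red : cs.IsReduced l' := by
        have := hred.drop (j := 1)
        simpa using this
      have hst : s ≠ t := fun h => hs (h ▸ htI)
      -- notation
      set w := cs.wordProd (t :: l') with hw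
      set w' := cs.wordProd l' with hw'
      have hwdec : w = cs.simple t * w' := by rw [hw, hw', cs.wordProd_cons]
      have hlw : cs.length w = l'.length + 1 := by
        have : cs.length w = (t :: l').length := hred
        simpa using this
      have hlw' : cs.length w' = l'.length := hl'red
      -- set u := s_s * w, length n+2? no : ℓ u = (l'.length + 1) + 1
      have hu : cs.length (cs.simple s * w) = l'.length + 2 := by
        have := length_simple_mul_parabolic cs hs (σ := t :: l') hlI
        rw [← hw] at this
        omega
      -- s_t is a left descent of u = s_s * w
      have hdesc : cs.length (cs.simple t * (cs.simple s * w))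
          < cs.length (cs.simple s * w) := by
        have harr : cs.simple t * (cs.simple s * w) = w' * cs.simple s := by
          rw [hcomm, hwdec,
            show cs.simple t * (cs.simple t * w' * cs.simple s)
              = (cs.simple t * cs.simple t) * (w' * cs.simple s) by group,
            cs.simple_mul_simple_self, one_mul]
        rw [harr]
        have : cs.length (w' * cs.simple s) ≤ cs.length w' + 1 := by
          have := cs.length_mul_le w' (cs.simple s)
          rw [cs.length_simple] at this
          exact this
        omega
      -- exchange on the word s :: t :: l'
      have hword : cs.wordProd (s :: t :: l') = cs.simple s * w := by
        rw [cs.wordProd_cons, ← hw]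
      obtain ⟨j, hj, heq, -⟩ := exchange_left cs (ω := s :: t :: l')
        (cs.isReflection_simple t) (by rw [hword]; exact hdesc)
      rw [hword] at heq
      have hMst : M s t = 2 := by
        rcases j with _ | j'
        · -- j = 0 : s_t = s_s, impossible
          exfalso
          simp only [List.eraseIdx_cons_zero] at heq
          rw [← hw] at heq
          have h1 : cs.simple t * (cs.simple s * w) = w := heq
          have h2 : cs.simple t * cs.simple s = 1 := by
            have h2' := congrArg (fun z => z * w⁻¹) h1
            rw [show cs.simple t * (cs.simple s * w) * w⁻¹
                = cs.simple t * cs.simple s * (w * w⁻¹) by group,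
              mul_inv_cancel, mul_one] at h2'
            exact h2'
          have h3 : cs.simple t = cs.simple s := by
            have h3' := congrArg (fun z => z * cs.simple s) h2
            simp only [one_mul] at h3'
            rw [mul_assoc, cs.simple_mul_simple_self, mul_one] at h3'
            exact h3'
          apply simple_notin_parabolic cs hs (σ := [t])
            (fun y hy => by rw [List.mem_singleton] at hy; exact hy ▸ htI)
          rw [cs.wordProd_singleton]
          exact h3
        · -- j = j' + 1
          simp only [List.eraseIdx_cons_succ] at heq
          rw [cs.wordProd_cons] at heq
          -- heq : s_t * (s_s * w) = s_s * π ((t::l').eraseIdx j')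
          set z := cs.wordProd ((t :: l').eraseIdx j') with hz
          have hzword : ∀ y ∈ (t :: l').eraseIdx j', y ∈ I :=
            fun y hy => hlI y ((List.eraseIdx_sublist (t :: l') j').subset hy)
          have hr : cs.simple s * cs.simple t * cs.simple s = z * w⁻¹ := by
            have := congrArg (fun q => cs.simple s * q * w⁻¹) heq
            rw [show cs.simple s * (cs.simple t * (cs.simple s * w)) * w⁻¹
                = cs.simple s * cs.simple t * cs.simple s * (w * w⁻¹) by group,
              show cs.simple s * (cs.simple s * z) * w⁻¹
                = (cs.simple s * cs.simple s) * z * w⁻¹ by group,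
              cs.simple_mul_simple_self, one_mul, mul_inv_cancel, mul_one] at this
            exact this
          -- z * w⁻¹ is a product of letters in I
          have hzw : z * w⁻¹ = cs.wordProd (((t :: l').eraseIdx j') ++ (t :: l').reverse) := by
            rw [cs.wordProd_append, cs.wordProd_reverse, ← hz, ← hw]
          -- r := s_s s_t s_s
          set r := cs.simple s * cs.simple t * cs.simple s with hrdef
          have hrI : ∃ σ : List S, (∀ y ∈ σ, y ∈ I) ∧ cs.wordProd σ = r := by
            refine ⟨((t :: l').eraseIdx j') ++ (t :: l').reverse, ?_, ?_⟩
            · intro y hy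
              rcases List.mem_append.mp hy with hy | hy
              · exact hzword y hy
              · exact hlI y (List.mem_reverse.mp hy)
            · rw [← hzw, hr]
          obtain ⟨σ, hσI, hσr⟩ := hrI
          obtain ⟨σ', hσ'red, hσ'sub, hσ'eq⟩ := exists_reduced_sub cs σ
          have hσ'I : ∀ y ∈ σ', y ∈ I := fun y hy => hσI y (hσ'sub y hy)
          rw [hσr] at hσ'eq
          -- length of r is odd and at most 3
          have hrodd : cs.length r % 2 = 1 := by
            have h1 := cs.length_mul_mod_two (cs.simple s * cs.simple t) (cs.simple s)
            have h2 := cs.length_mul_mod_two (cs.simple s) (cs.simple t)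
            simp only [cs.length_simple] at h1 h2
            rw [hrdef]
            omega
          have hrle : cs.length r ≤ 3 := by
            have h1 := cs.length_mul_le (cs.simple s * cs.simple t) (cs.simple s)
            have h2 := cs.length_mul_le (cs.simple s) (cs.simple t)
            simp only [cs.length_simple] at h1 h2
            rw [hrdef]
            omega
          have hrcases : cs.length r = 1 ∨ cs.length r = 3 := by omega
          rcases hrcases with h1 | h3
          · -- σ' has length 1 : r = simple x for x ∈ I
            have hlen1 : σ'.length = 1 := by
              have : cs.length (cs.wordProd σ') = σ'.length := hσ'red
              rw [hσ'eq, h1] at this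
              omega
            obtain ⟨y, rfl⟩ := List.length_eq_one_iff.mp hlen1
            rw [cs.wordProd_singleton] at hσ'eq
            exact M_eq_two_of_conj M cs hst hσ'eq.symm
          · -- length 3 : contradiction
            exfalso
            have hfour : cs.length (r * cs.simple s) = 4 := by
              have := length_mul_simple_parabolic cs hs hσ'I
              rw [hσ'eq, h3] at this
              omega
            have hback : cs.simple s * (r * cs.simple s) = cs.simple t := by
              rw [hrdef]
              rw [show cs.simple s * (cs.simple s * cs.simple t * cs.simple s * cs.simple s)
                  = (cs.simple s * cs.simple s) * cs.simple t * (cs.simple s * cs.simple s)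
                  by group, cs.simple_mul_simple_self, one_mul, mul_one]
            have hdich := cs.length_simple_mul (r * cs.simple s) s
            rw [hback, cs.length_simple, hfour] at hdich
            omega
      -- now M s t = 2 ⟹ the simples commute, and we can recurse
      rcases List.mem_cons.mp hx with hxt | hx'
      · rw [hxt]
        exact hMst
      · -- x ∈ l'
        have hcomm2 : cs.simple s * cs.simple t = cs.simple t * cs.simple s := by
          have hpow := cs.simple_mul_simple_pow s t
          rw [hMst, pow_two] at hpow
          have hinv : (cs.simple s * cs.simple t)⁻¹ = cs.simple s * cs.simple t :=
            inv_eq_of_mul_eq_one_right hpow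
          rw [← hinv, mul_inv_rev, cs.inv_simple, cs.inv_simple]
        have hcommw' : cs.simple s * w' = w' * cs.simple s := by
          have h1 : cs.simple t * (cs.simple s * w') = cs.simple t * (w' * cs.simple s) := by
            rw [← mul_assoc, ← hcomm2, mul_assoc, ← hwdec]
            rw [hcomm, hwdec]
            group
          exact mul_left_cancel h1
        exact ih hl'I hl'red hcommw' x hx'

end partC

end CoxAux

/-- Let `(W, cs)` be the Coxeter system of a Coxeter matrix `M` on `S`, let `I ⊆ S`,
`s ∈ S` with `s ∉ I`, and let `l = (t₁, …, t_n)` be a reduced word all of whose letters lie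
in `I`.  If the word `(s, t₁, …, t_n, s)` is not reduced, i.e.
`ℓ(s · t₁ ⋯ t_n · s) < n + 2`, then `M s t_r = 2` for every letter `t_r` of `l`. -/
theorem M_eq_two_of_not_reduced {S : Type*} {M : CoxeterMatrix S}
    {W : Type*} [Group W] (cs : CoxeterSystem M W)
    (I : Set S) (s : S) (hs : s ∉ I)
    (l : List S) (hlI : ∀ x ∈ l, x ∈ I) (hred : cs.IsReduced l)
    (hnotred : cs.length (cs.wordProd (s :: (l ++ [s]))) < l.length + 2) :
    ∀ x ∈ l, M s x = 2 := by
  set w := cs.wordProd l with hw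
  have hlw : cs.length w = l.length := hred
  have hu : cs.length (cs.simple s * w) = l.length + 1 := by
    have := CoxAux.length_simple_mul_parabolic cs hs (σ := l) hlI
    rw [← hw] at this
    omega
  have hprod : cs.wordProd (s :: (l ++ [s])) = (cs.simple s * w) * cs.simple s := by
    rw [cs.wordProd_cons, cs.wordProd_append, cs.wordProd_singleton, ← hw, mul_assoc]
  rw [hprod] at hnotred
  have hdich := cs.length_mul_simple (cs.simple s * w) s
  have hlt : cs.length ((cs.simple s * w) * cs.simple s) < cs.length (cs.simple s * w) := by
    omega
  have hrevword : cs.wordProd (l.reverse ++ [s]) = (cs.simple s * w)⁻¹ := by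
    rw [cs.wordProd_append, cs.wordProd_singleton, cs.wordProd_reverse, mul_inv_rev,
      cs.inv_simple, ← hw]
  have hlt' : cs.length (cs.simple s * cs.wordProd (l.reverse ++ [s]))
      < cs.length (cs.wordProd (l.reverse ++ [s])) := by
    rw [hrevword]
    rw [show cs.simple s * (cs.simple s * w)⁻¹ = ((cs.simple s * w) * cs.simple s)⁻¹ by
      rw [mul_inv_rev, mul_inv_rev, mul_inv_rev, cs.inv_simple]]
    rw [cs.length_inv, cs.length_inv]
    exact hlt
  obtain ⟨j, hj, heq, -⟩ := CoxAux.exchange_left cs (cs.isReflection_simple s) hlt'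
  have hjlen : j < l.length + 1 := by simpa using hj
  have hcomm : cs.simple s * w = w * cs.simple s := by
    rcases Nat.lt_or_ge j l.length with hjn | hjn
    · exfalso
      rw [List.eraseIdx_append_of_lt_length (by simpa using hjn) [s]] at heq
      rw [hrevword, cs.wordProd_append, cs.wordProd_singleton] at heq
      have hzval : cs.wordProd (l.reverse.eraseIdx j) = cs.simple s * w⁻¹ := by
        have h1 := congrArg (fun q : W => q * cs.simple s) heq
        rw [show cs.simple s * (cs.simple s * w)⁻¹ * cs.simple s
            = cs.simple s * w⁻¹ * (cs.simple s)⁻¹ * cs.simple s by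
            simp only [mul_inv_rev, cs.inv_simple, mul_assoc]] at h1
        rw [show cs.simple s * w⁻¹ * (cs.simple s)⁻¹ * cs.simple s
            = cs.simple s * w⁻¹ by group] at h1
        rw [mul_assoc, cs.simple_mul_simple_self, mul_one] at h1
        exact h1.symm
      have hlenz : cs.length (cs.wordProd (l.reverse.eraseIdx j)) ≤ l.length - 1 := by
        have h1 := cs.length_wordProd_le (l.reverse.eraseIdx j)
        have h2 : (l.reverse.eraseIdx j).length = l.length - 1 := by
          rw [List.length_eraseIdx, if_pos (by simpa using hjn), List.length_reverse]
        omega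
      have hbig : cs.length (cs.simple s * w⁻¹) = l.length + 1 := by
        have h3 := CoxAux.length_simple_mul_parabolic cs hs (σ := l.reverse)
          (fun y hy => hlI y (List.mem_reverse.mp hy))
        rw [cs.wordProd_reverse, ← hw, cs.length_inv] at h3
        omega
      rw [hzval] at hlenz
      have hlpos : 0 < l.length := by
        rcases Nat.eq_zero_or_pos l.length with h0 | h
        · exfalso; omega
        · exact h
      omega
    · have hjeq : j = l.length := by omega
      rw [hjeq] at heq
      rw [List.eraseIdx_append_of_length_le (by simp) [s]] at heq
      rw [show l.length - l.reverse.length = 0 by simp] at heq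
      simp only [List.eraseIdx_cons_zero, List.append_nil] at heq
      rw [hrevword, cs.wordProd_reverse, ← hw] at heq
      -- heq : s_s * (s_s * w)⁻¹ = w⁻¹
      have h1 := congrArg (fun q : W => q⁻¹) heq
      simp only [mul_inv_rev, inv_inv, cs.inv_simple] at h1
      -- h1 : (s_s * w) * s_s = w
      have h2 := congrArg (fun q : W => q * cs.simple s) h1
      rw [mul_assoc (cs.simple s * w), cs.simple_mul_simple_self, mul_one] at h2
      exact h2
  exact CoxAux.commute_letters cs hs l hlI hred hcomm
end

section
/- Let M be a Coxeter matrix on a countable type S with M s t = 0 or M s t ≥ 4 for all s ≠ t (extra-large type, 0 encoding ∞), let A be the associated Artin group with generators a : S → A, and let (a_{i_1}^{ε_1}, …, a_{i_k}^{ε_k}) be a word in the generators and their inverses (ε_j ∈ {+1, −1}) whose associated partition of {1, …, k} contains a one-element block (i.e., some letter index appears exactly once among i_1, …, i_k). Then a_{i_1}^{ε_1} · … · a_{i_k}^{ε_k} ≠ 1 in A. -/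
open Filter Topology

/-- The alternating word `s·t·s·t·⋯` with `m` factors (starting with `s`), as an element of the
free group on `S`. -/
def artinAltWord {S : Type*} (s t : S) (m : ℕ) : FreeGroup S :=
  (List.ofFn fun j : Fin m => FreeGroup.of (if (j : ℕ) % 2 = 0 then s else t)).prod

/-- The Artin relators associated to a Coxeter matrix `M` : for each pair `s ≠ t` with
`2 ≤ M s t` (finite), the relator `alt(s, t, M s t) · alt(t, s, M s t)⁻¹` expressing
`s·t·s·⋯ = t·s·t·⋯` (both sides with `M s t` factors). -/
def artinRelators {S : Type*} (M : CoxeterMatrix S) : Set (FreeGroup S) :=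
  {x | ∃ s t : S, s ≠ t ∧ 2 ≤ M s t ∧
    x = artinAltWord s t (M s t) * (artinAltWord t s (M s t))⁻¹}

/-- The Artin group associated to a Coxeter matrix `M`. -/
abbrev ArtinGroup {S : Type*} (M : CoxeterMatrix S) : Type _ :=
  PresentedGroup (artinRelators M)

/-- The generators of the Artin group associated to `M`. -/
def artinGen {S : Type*} (M : CoxeterMatrix S) (s : S) : ArtinGroup M :=
  PresentedGroup.of s

namespace ArtinAux

noncomputable section

open Real Matrix Finsupp

variable {S : Type*} (M : CoxeterMatrix S)

/-- Coefficients of the Tits bilinear form. -/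
def cf (a b : S) : ℝ := - Real.cos (Real.pi / (M a b : ℝ))

lemma cf_self (a : S) : cf M a a = 1 := by
  simp [cf, M.diagonal a]

lemma cf_symm (a b : S) : cf M a b = cf M b a := by
  rw [cf, cf, M.symmetric]

/-- The pairing `B(e_a, v)`. -/
def pr (a : S) (v : S →₀ ℝ) : ℝ := v.sum fun b r => cf M a b * r

lemma pr_add (a : S) (u v : S →₀ ℝ) : pr M a (u + v) = pr M a u + pr M a v :=
  Finsupp.sum_add_index' (fun b => by simp) (fun b r r' => mul_add _ _ _)

lemma pr_single (a b : S) (r : ℝ) : pr M a (Finsupp.single b r) = cf M a b * r :=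
  Finsupp.sum_single_index (by simp)

/-- The simple reflection as a function. -/
def sg (a : S) (v : S →₀ ℝ) : S →₀ ℝ := v + Finsupp.single a (-(2 * pr M a v))

lemma pr_sg_self (a : S) (v : S →₀ ℝ) : pr M a (sg M a v) = - pr M a v := by
  rw [sg, pr_add, pr_single, cf_self]; ring

lemma sg_invol (a : S) : Function.Involutive (sg M a) := by
  intro v
  rw [sg, pr_sg_self]
  rw [sg, add_assoc, ← Finsupp.single_add]
  simp

lemma sg_apply_ne (a b : S) (h : b ≠ a) (v : S →₀ ℝ) : sg M a v b = v b := by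
  rw [sg]
  simp [Finsupp.single_apply_eq_zero, h]

/-- Adding singles into the `a, b` plane. -/
private lemma combine (v : S →₀ ℝ) (a b : S) (P Q R : ℝ) :
    v + Finsupp.single a P + Finsupp.single b Q + Finsupp.single b R
      = v + Finsupp.single a P + Finsupp.single b (Q + R) := by
  rw [Finsupp.single_add]; abel

private lemma combine' (v : S →₀ ℝ) (a b : S) (P Q R : ℝ) :
    v + Finsupp.single a P + Finsupp.single b Q + Finsupp.single a R
      = v + Finsupp.single a (P + R) + Finsupp.single b Q := by
  rw [Finsupp.single_add]; abel

section Dihedral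

variable {a b : S} (hab : a ≠ b) (v : S →₀ ℝ)

/-- The plane element. -/
private def w (v : S →₀ ℝ) (a b : S) (z : Fin 2 → ℝ) : S →₀ ℝ :=
  v + Finsupp.single a (z 0) + Finsupp.single b (z 1)

private lemma pr_w_a (z : Fin 2 → ℝ) :
    pr M a (w v a b z) = pr M a v + z 0 + cf M a b * z 1 := by
  rw [w, pr_add, pr_add, pr_single, pr_single, cf_self]; ring

private lemma pr_w_b (z : Fin 2 → ℝ) :
    pr M b (w v a b z) = pr M b v + cf M a b * z 0 + z 1 := by
  rw [w, pr_add, pr_add, pr_single, pr_single, cf_self, cf_symm M b a]; ring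

private lemma sg_b_w (z : Fin 2 → ℝ) :
    sg M b (w v a b z)
      = w v a b ![z 0, -(z 1) - 2 * cf M a b * z 0 - 2 * pr M b v] := by
  rw [sg, pr_w_b, w, combine]
  have h : z 1 + -(2 * (pr M b v + cf M a b * z 0 + z 1))
      = -(z 1) - 2 * cf M a b * z 0 - 2 * pr M b v := by ring
  rw [h, w]
  simp

private lemma sg_a_w (z : Fin 2 → ℝ) :
    sg M a (w v a b z)
      = w v a b ![-(z 0) - 2 * cf M a b * z 1 - 2 * pr M a v, z 1] := by
  rw [sg, pr_w_a, w, combine']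
  have h : z 0 + -(2 * (pr M a v + z 0 + cf M a b * z 1))
      = -(z 0) - 2 * cf M a b * z 1 - 2 * pr M a v := by ring
  rw [h, w]
  simp

/-- The matrix of the linear part of `σ_a σ_b` on the plane. -/
private def Lm (c : ℝ) : Matrix (Fin 2) (Fin 2) ℝ := !![4*c^2 - 1, 2*c; -2*c, -1]

/-- The translation part. -/
private def dv (c x y : ℝ) : Fin 2 → ℝ := ![4*c*y - 2*x, -2*y]

private lemma step_w (z : Fin 2 → ℝ) :
    sg M a (sg M b (w v a b z))
      = w v a b ((Lm (cf M a b)).mulVec z + dv (cf M a b) (pr M a v) (pr M b v)) := by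
  rw [sg_b_w, sg_a_w]
  congr 1
  funext i
  fin_cases i <;>
    simp [Lm, dv, Matrix.mulVec, dotProduct, Fin.sum_univ_two, Matrix.vecHead, Matrix.vecTail] <;> ring

private lemma cayley (c : ℝ) : Lm c * Lm c = (4*c^2 - 2) • Lm c - 1 := by
  ext i j
  fin_cases i <;> fin_cases j <;>
    simp [Lm, Matrix.mul_apply, Fin.sum_univ_two, Matrix.one_apply] <;> ring

end Dihedral

section MatrixLemmas

private lemma Lm_pow_chebyshev (c φ : ℝ) (hcos : 4*c^2 - 2 = 2 * Real.cos φ) :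
    ∀ k : ℕ, Real.sin φ • (Lm c) ^ (k+1)
      = Real.sin (((k:ℝ)+1) * φ) • Lm c
        - Real.sin ((k:ℝ) * φ) • (1 : Matrix (Fin 2) (Fin 2) ℝ) := by
  intro k
  induction k with
  | zero => simp
  | succ k ih =>
    have hp : (Lm c)^(k+1+1) = (Lm c)^(k+1) * Lm c := by rw [pow_succ]
    rw [hp, ← smul_mul_assoc, ih, sub_mul, smul_mul_assoc, smul_mul_assoc, cayley c, one_mul,
      smul_sub, smul_smul, hcos]
    push_cast
    have hs : Real.sin (((k:ℝ)+1+1)*φ)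
        = 2 * Real.cos φ * Real.sin (((k:ℝ)+1)*φ) - Real.sin ((k:ℝ)*φ) := by
      have h1 : ((k:ℝ)+1+1) * φ = ((k:ℝ)+1)*φ + φ := by ring
      have h2 : (k:ℝ) * φ = ((k:ℝ)+1)*φ - φ := by ring
      rw [h1, h2, Real.sin_add, Real.sin_sub]; ring
    rw [hs]
    module

private lemma Lm_pow_eq_one {m : ℕ} (hm2 : 2 ≤ m) {c : ℝ}
    (hc : c = -Real.cos (Real.pi/(m:ℝ))) : Lm c ^ m = 1 := by
  have hm0 : (m:ℝ) ≠ 0 := by positivity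
  rcases eq_or_lt_of_le hm2 with hm | hm
  · -- m = 2
    subst hm
    have hc0 : c = 0 := by
      rw [hc]
      norm_num [Real.cos_pi_div_two]
    subst hc0
    rw [pow_two]
    ext i j
    fin_cases i <;> fin_cases j <;>
      simp [Lm, Matrix.mul_apply, Fin.sum_univ_two, Matrix.one_apply] <;> ring
  · -- 3 ≤ m
    have hm3 : (3:ℕ) ≤ m := hm
    set φ := 2 * Real.pi / (m:ℝ) with hφdef
    have hmR : (3:ℝ) ≤ (m:ℝ) := by exact_mod_cast hm3
    have hφ0 : 0 < φ := by
      rw [hφdef]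
      positivity
    have hφπ : φ < Real.pi := by
      rw [hφdef, div_lt_iff₀ (by linarith : (0:ℝ) < (m:ℝ))]
      nlinarith [Real.pi_pos]
    have hsin : Real.sin φ ≠ 0 :=
      ne_of_gt (Real.sin_pos_of_pos_of_lt_pi hφ0 hφπ)
    have hcos : 4*c^2 - 2 = 2 * Real.cos φ := by
      rw [hc, show φ = 2*(Real.pi/(m:ℝ)) by rw [hφdef]; ring, Real.cos_two_mul]
      ring
    have hch := Lm_pow_chebyshev c φ hcos (m-1)
    have hm1 : m - 1 + 1 = m := by omega
    have hcast : (((m-1:ℕ)):ℝ) = (m:ℝ) - 1 := by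
      have : (1:ℕ) ≤ m := by omega
      push_cast [Nat.cast_sub this]
      ring
    rw [hm1, hcast] at hch
    have e1 : ((m:ℝ) - 1 + 1) * φ = 2 * Real.pi := by
      rw [hφdef, sub_add_cancel]
      field_simp
    have e2 : ((m:ℝ) - 1) * φ = 2 * Real.pi - φ := by
      rw [hφdef]
      field_simp
    rw [e1, e2, Real.sin_two_pi] at hch
    have e3 : Real.sin (2 * Real.pi - φ) = - Real.sin φ := by
      rw [Real.sin_sub, Real.sin_two_pi, Real.cos_two_pi]
      ring
    rw [e3] at hch
    have : Real.sin φ • Lm c ^ m = Real.sin φ • (1 : Matrix (Fin 2) (Fin 2) ℝ) := by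
      rw [hch]
      module
    exact smul_right_injective _ hsin this

private lemma abs_c_lt_one {m : ℕ} (hm2 : 2 ≤ m) {c : ℝ}
    (hc : c = -Real.cos (Real.pi/(m:ℝ))) : c^2 < 1 := by
  have hmR : (2:ℝ) ≤ (m:ℝ) := by exact_mod_cast hm2
  have h0 : 0 < Real.pi / (m:ℝ) := by positivity
  have hle : Real.pi / (m:ℝ) ≤ Real.pi / 2 := by
    apply div_le_div_of_nonneg_left Real.pi_pos.le (by linarith) hmR
  have hnn : 0 ≤ Real.cos (Real.pi/(m:ℝ)) := by
    apply Real.cos_nonneg_of_mem_Icc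
    constructor <;> [linarith; linarith]
  have hlt : Real.cos (Real.pi/(m:ℝ)) < 1 := by
    have := Real.cos_lt_cos_of_nonneg_of_le_pi (le_refl 0)
      (le_trans hle (by linarith [Real.pi_pos])) h0
    simpa using this
  rw [hc]
  nlinarith

private lemma Lm_geom_sum_eq_zero {m : ℕ} (hm2 : 2 ≤ m) {c : ℝ}
    (hc : c = -Real.cos (Real.pi/(m:ℝ))) :
    ∑ j ∈ Finset.range m, Lm c ^ j = 0 := by
  have hne : 4*(1 - c^2) ≠ 0 := by
    have := abs_c_lt_one hm2 hc
    nlinarith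
  set X : Matrix (Fin 2) (Fin 2) ℝ :=
    (4*(1 - c^2))⁻¹ • !![(-2 : ℝ), -2*c; 2*c, 4*c^2 - 2] with hX
  have hinv : (Lm c - 1) * X = 1 := by
    rw [hX, Matrix.mul_smul]
    rw [inv_smul_eq_iff₀ hne]
    ext i j
    fin_cases i <;> fin_cases j <;>
      simp [Lm, Matrix.mul_apply, Fin.sum_univ_two, Matrix.one_apply,
        Matrix.sub_apply, Matrix.smul_apply] <;> ring
  have hgs : (∑ j ∈ Finset.range m, Lm c ^ j) * (Lm c - 1) = Lm c ^ m - 1 :=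
    geom_sum_mul (Lm c) m
  rw [Lm_pow_eq_one hm2 hc, sub_self] at hgs
  calc ∑ j ∈ Finset.range m, Lm c ^ j
      = (∑ j ∈ Finset.range m, Lm c ^ j) * ((Lm c - 1) * X) := by rw [hinv, mul_one]
    _ = ((∑ j ∈ Finset.range m, Lm c ^ j) * (Lm c - 1)) * X := by rw [mul_assoc]
    _ = 0 := by rw [hgs, zero_mul]

end MatrixLemmas

section Dihedral2

variable {a b : S}

lemma sg_sg_iterate (h2 : 2 ≤ M a b) (v : S →₀ ℝ) :
    (fun u => sg M a (sg M b u))^[M a b] v = v := by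
  set m := M a b with hm
  set c := cf M a b with hc
  have hcval : c = -Real.cos (Real.pi/(m:ℝ)) := by rw [hc, cf]
  set x := pr M a v with hx
  set y := pr M b v with hy
  set step : (Fin 2 → ℝ) → (Fin 2 → ℝ) := fun z => (Lm c).mulVec z + dv c x y with hstep
  have hiter : ∀ (k : ℕ) (z : Fin 2 → ℝ),
      (fun u => sg M a (sg M b u))^[k] (w v a b z) = w v a b (step^[k] z) := by
    intro k
    induction k with
    | zero => intro z; simp
    | succ k ih =>
      intro z
      rw [Function.iterate_succ_apply, Function.iterate_succ_apply]
      have := step_w M v (a := a) (b := b) z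
      rw [this]
      exact ih _
  have hsumk : ∀ k : ℕ, step^[k] 0 = (∑ j ∈ Finset.range k, Lm c ^ j).mulVec (dv c x y) := by
    intro k
    induction k with
    | zero => simp [Matrix.zero_mulVec]
    | succ k ih =>
      rw [Function.iterate_succ_apply', ih, hstep, geom_sum_succ, Matrix.add_mulVec,
        Matrix.one_mulVec, ← Matrix.mulVec_mulVec]
  have hstepm : step^[m] 0 = 0 := by
    rw [hsumk m, Lm_geom_sum_eq_zero h2 hcval, Matrix.zero_mulVec]
  have h0 : w v a b 0 = v := by simp [w]
  calc (fun u => sg M a (sg M b u))^[m] v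
      = (fun u => sg M a (sg M b u))^[m] (w v a b 0) := by rw [h0]
    _ = w v a b (step^[m] 0) := hiter m 0
    _ = v := by rw [hstepm, h0]

end Dihedral2

/-- The simple reflection as a permutation. -/
def sgPerm (a : S) : Equiv.Perm (S →₀ ℝ) := (sg_invol M a).toPerm _

lemma sgPerm_apply (a : S) (v : S →₀ ℝ) : sgPerm M a v = sg M a v := rfl

lemma sgPerm_mul_self (a : S) : sgPerm M a * sgPerm M a = 1 := by
  apply Equiv.ext
  intro v
  simp only [Equiv.Perm.mul_apply, Equiv.Perm.one_apply, sgPerm_apply]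
  exact sg_invol M a v

lemma sgPerm_inv (a : S) : (sgPerm M a)⁻¹ = sgPerm M a :=
  inv_eq_of_mul_eq_one_right (sgPerm_mul_self M a)

lemma sgPerm_zpow (a : S) {e : ℤ} (he : e = 1 ∨ e = -1) :
    sgPerm M a ^ e = sgPerm M a := by
  rcases he with he | he <;> subst he
  · exact zpow_one _
  · rw [_root_.zpow_neg, zpow_one, sgPerm_inv]

lemma sgPerm_braid_pow {a b : S} (h2 : 2 ≤ M a b) :
    (sgPerm M a * sgPerm M b) ^ (M a b) = 1 := by
  apply Equiv.ext
  intro v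
  have hco : ⇑(sgPerm M a * sgPerm M b) = (fun u => sg M a (sg M b u)) := by
    funext u
    simp [Equiv.Perm.mul_apply, sgPerm_apply]
  have hpow : ∀ (f : Equiv.Perm (S →₀ ℝ)) (n : ℕ) (u : S →₀ ℝ), (f ^ n) u = (⇑f)^[n] u := by
    intro f n
    induction n with
    | zero => intro u; simp
    | succ n ih =>
      intro u
      rw [pow_succ', Equiv.Perm.mul_apply, ih, Function.iterate_succ_apply']
  rw [hpow, hco]
  simpa using sg_sg_iterate M h2 v

end

end ArtinAux

section AltProd

variable {G : Type*} [Monoid G]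

/-- Alternating product. -/
def altP (g h : G) (m : ℕ) : G :=
  (List.ofFn fun j : Fin m => if (j : ℕ) % 2 = 0 then g else h).prod

lemma altP_succ (g h : G) (n : ℕ) :
    altP g h (n+1) = altP g h n * (if n % 2 = 0 then g else h) := by
  rw [altP, List.ofFn_succ', List.prod_concat, altP]
  have h1 : (fun j : Fin n => if ((j.castSucc : Fin (n+1)) : ℕ) % 2 = 0 then g else h)
      = fun j : Fin n => if (j : ℕ) % 2 = 0 then g else h := by
    funext j
    simp
  have h2 : ((Fin.last n : Fin (n+1)) : ℕ) = n := rfl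
  rw [h2]
  congr 2

lemma altP_closed (g h : G) : ∀ r : ℕ, altP g h (2*r) = (g*h)^r ∧ altP g h (2*r+1) = (g*h)^r * g := by
  intro r
  induction r with
  | zero =>
    constructor
    · simp [altP]
    · rw [show 2*0+1 = 0+1 from rfl, altP_succ]
      simp [altP]
  | succ r ih =>
    have heven : altP g h (2*(r+1)) = (g*h)^(r+1) := by
      rw [show 2*(r+1) = (2*r+1)+1 by ring, altP_succ]
      have : (2*r+1) % 2 = 1 := by omega
      rw [this, ih.2, pow_succ, mul_assoc]
      simp
    refine ⟨heven, ?_⟩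
    rw [altP_succ]
    have : (2*(r+1)) % 2 = 0 := by omega
    rw [this, heven]
    simp

lemma altP_braid {H : Type*} [Group H] {g h : H} (hg : g*g = 1) (hh : h*h = 1) {m : ℕ}
    (hm : (g*h)^m = 1) : altP g h m = altP h g m := by
  have hginv : g⁻¹ = g := inv_eq_of_mul_eq_one_right hg
  have hhinv : h⁻¹ = h := inv_eq_of_mul_eq_one_right hh
  have hhg : h * g = (g*h)⁻¹ := by rw [mul_inv_rev, hginv, hhinv]
  rcases Nat.even_or_odd m with ⟨r, hr⟩ | ⟨r, hr⟩
  · have hr' : m = 2*r := by omega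
    subst hr'
    rw [(altP_closed g h r).1, (altP_closed h g r).1, hhg, inv_pow]
    have h1 : (g*h)^r * (g*h)^r = 1 := by
      rw [← pow_add, show r + r = 2*r by ring]
      exact hm
    exact (inv_eq_of_mul_eq_one_right h1).symm
  · have hr' : m = 2*r+1 := by omega
    subst hr'
    rw [(altP_closed g h r).2, (altP_closed h g r).2, hhg, inv_pow]
    have hcomm : (g*h) * (g*h)^r = (g*h)^r * (g*h) := by
      rw [← pow_succ, ← pow_succ']
    have he : (g*h)^r * ((g*h) * (g*h)^r) = (g*h)^(2*r+1) := by
      rw [← pow_succ', ← pow_add]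
      congr 1
      omega
    have hXinv : ((g*h)^r)⁻¹ = (g*h) * (g*h)^r := by
      apply inv_eq_of_mul_eq_one_right
      rw [he]
      exact hm
    rw [hXinv, hcomm, mul_assoc, mul_assoc, hh, mul_one]

end AltProd

lemma lift_altWord {S : Type*} {G : Type*} [Group G] (f : S → G) (s t : S) (m : ℕ) :
    FreeGroup.lift f (artinAltWord s t m) = altP (f s) (f t) m := by
  rw [artinAltWord, map_list_prod, List.map_ofFn, altP]
  have h : (⇑(FreeGroup.lift f) ∘ fun j : Fin m => FreeGroup.of (if (j:ℕ) % 2 = 0 then s else t))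
      = fun j : Fin m => if (j:ℕ) % 2 = 0 then f s else f t := by
    funext j
    simp only [Function.comp_apply, FreeGroup.lift_apply_of]
    exact apply_ite f _ _ _
  rw [h]

/-- Let `M` be a Coxeter matrix of extra-large type (`M s t = 0` or `M s t ≥ 4` for `s ≠ t`,
`0` encoding `∞`) on a countable type `S`, with Artin group `A` and generators `a`.  If in the
word `(a_{i₁}^{ε₁}, …, a_{i_k}^{ε_k})` some letter index appears exactly once (the associated
partition has a one-element block), then `a_{i₁}^{ε₁} ⋯ a_{i_k}^{ε_k} ≠ 1` in `A`. -/
theorem artin_word_ne_one_of_singleton_block {S : Type*} [Countable S]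
    (M : CoxeterMatrix S) (hM : ∀ s t : S, s ≠ t → M s t = 0 ∨ 4 ≤ M s t)
    {k : ℕ} (i : Fin k → S) (ε : Fin k → ℤ) (hε : ∀ j, ε j = 1 ∨ ε j = -1)
    (hone : ∃ j : Fin k, Nat.card {l : Fin k // i l = i j} = 1) :
    (List.ofFn fun j => artinGen M (i j) ^ ε j).prod ≠ 1 := by
  classical
  obtain ⟨j₀, hj₀⟩ := hone
  set s₀ := i j₀ with hs₀
  have huniq : ∀ l : Fin k, i l = s₀ → l = j₀ := by
    intro l hl
    have hsub : Subsingleton {l : Fin k // i l = i j₀} :=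
      (Nat.card_eq_one_iff_unique.mp hj₀).1
    have := @Subsingleton.elim _ hsub ⟨l, hl⟩ ⟨j₀, rfl⟩
    exact congrArg Subtype.val this
  have hrel : ∀ r ∈ artinRelators M,
      FreeGroup.lift (fun u => ArtinAux.sgPerm M u) r = 1 := by
    rintro r ⟨s, t, hst, h2, rfl⟩
    rw [map_mul, map_inv, lift_altWord, lift_altWord,
      altP_braid (ArtinAux.sgPerm_mul_self M s) (ArtinAux.sgPerm_mul_self M t)
        (ArtinAux.sgPerm_braid_pow M h2)]
    simp
  have hΦof : ∀ u : S, PresentedGroup.toGroup hrel (artinGen M u) = ArtinAux.sgPerm M u :=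
    fun u => PresentedGroup.toGroup.of hrel
  intro hcontra
  have h1 : PresentedGroup.toGroup hrel ((List.ofFn fun j => artinGen M (i j) ^ ε j).prod)
      = 1 := by rw [hcontra, map_one]
  rw [map_list_prod, List.map_ofFn] at h1
  have hcomp : ((PresentedGroup.toGroup hrel) ∘ fun j => artinGen M (i j) ^ ε j)
      = fun j => ArtinAux.sgPerm M (i j) ^ (ε j) := by
    funext j
    simp only [Function.comp_apply, map_zpow, hΦof]
  rw [hcomp] at h1
  set Hs : Subgroup (Equiv.Perm (S →₀ ℝ)) :=
    { carrier := {g | ∀ v : S →₀ ℝ, g v s₀ = v s₀}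
      one_mem' := fun v => rfl
      mul_mem' := by
        intro g1 g2 hg1 hg2 v
        rw [Equiv.Perm.mul_apply, hg1, hg2]
      inv_mem' := by
        intro g hg v
        have h := hg (g⁻¹ v)
        rw [show g (g⁻¹ v) = v from g.apply_symm_apply v] at h
        exact h.symm } with hHs
  have hmemH : ∀ j : Fin k, j ≠ j₀ → ArtinAux.sgPerm M (i j) ^ (ε j) ∈ Hs := by
    intro j hj
    have hne : i j ≠ s₀ := fun hc => hj (huniq j hc)
    apply Subgroup.zpow_mem
    intro v
    exact ArtinAux.sg_apply_ne M (i j) s₀ (Ne.symm hne) v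
  have hsplit : ∀ {n : ℕ} (F : Fin n → Equiv.Perm (S →₀ ℝ)) (j' : Fin n),
      (∀ j, j ≠ j' → F j ∈ Hs) →
      ∃ A ∈ Hs, ∃ B ∈ Hs, (List.ofFn F).prod = A * F j' * B := by
    intro n
    induction n with
    | zero => exact fun F j' _ => j'.elim0
    | succ n ih =>
      intro F j' hF
      rw [List.ofFn_succ, List.prod_cons]
      rcases Fin.eq_zero_or_eq_succ j' with h0 | ⟨j'', rfl⟩
      · subst h0
        refine ⟨1, Hs.one_mem, (List.ofFn fun l => F l.succ).prod, ?_, by rw [one_mul]⟩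
        apply Subgroup.list_prod_mem
        intro x hx
        obtain ⟨j, hj⟩ := List.mem_ofFn.mp hx
        exact hj ▸ hF _ (Fin.succ_ne_zero j)
      · obtain ⟨A, hA, B, hB, hprod⟩ := ih (fun l => F l.succ) j''
          (fun j hj => hF j.succ (by simpa [Fin.succ_inj] using hj))
        refine ⟨F 0 * A, Hs.mul_mem (hF 0 (Fin.succ_ne_zero j'').symm) hA, B, hB, ?_⟩
        rw [hprod, ← mul_assoc, ← mul_assoc]
  obtain ⟨A, hA, B, hB, hprod⟩ := hsplit _ j₀ hmemH
  rw [h1] at hprod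
  have hg0 : ArtinAux.sgPerm M (i j₀) ^ (ε j₀) = A⁻¹ * B⁻¹ := by
    have hx : A * (ArtinAux.sgPerm M (i j₀) ^ (ε j₀)) * B = 1 := hprod.symm
    calc ArtinAux.sgPerm M (i j₀) ^ (ε j₀)
        = A⁻¹ * (A * (ArtinAux.sgPerm M (i j₀) ^ (ε j₀)) * B) * B⁻¹ := by group
      _ = A⁻¹ * 1 * B⁻¹ := by rw [hx]
      _ = A⁻¹ * B⁻¹ := by group
  have hmem0 : ArtinAux.sgPerm M (i j₀) ^ (ε j₀) ∈ Hs :=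
    hg0 ▸ Hs.mul_mem (Hs.inv_mem hA) (Hs.inv_mem hB)
  rw [ArtinAux.sgPerm_zpow M (i j₀) (hε j₀)] at hmem0
  have hval := hmem0 (Finsupp.single s₀ 1)
  rw [ArtinAux.sgPerm_apply] at hval
  have hpr : ArtinAux.pr M s₀ (Finsupp.single s₀ 1) = 1 := by
    rw [ArtinAux.pr_single, ArtinAux.cf_self, mul_one]
  rw [ArtinAux.sg, hs₀] at hval
  rw [← hs₀, hpr] at hval
  simp [Finsupp.add_apply, Finsupp.single_eq_same] at hval
end
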